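/- arXiv:1501.03436 — 6 statements merged into one kernel-verified Lean document; each statement's English description precedes it below -/
import Mathlib

section
/- Let G and H be connected finite simple graphs, with H having k vertices, and let f : V(G) → V(H) be a nonconstant function. Then Σ_{{u,v}} d_H(f(u),f(v))² · deg_G(u) · deg_G(v) ≤ (vol(G)² · D_H² / 2) · (1 − 1/k), where the sum is over unordered pairs of distinct vertices u, v of G. -/
open scoped Classical
open Finset

/-- Degree of a vertex in a finite simple graph. -/
noncomputable def gdeg {V : Type*} [Fintype V] (G : SimpleGraph V) (v : V) : ℕ :=
  (G.neighborSet v).ncard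

/-- The volume of a finite simple graph: the sum of the degrees of all vertices. -/
noncomputable def gvol {V : Type*} [Fintype V] (G : SimpleGraph V) : ℕ :=
  ∑ v, gdeg G v

/-- The Rayleigh-type quotient `R_f(G, X)` for an embedding `f : V(G) → X` where `X`
carries a distance function `d`.  The sum over ordered pairs of adjacent vertices divided
by `2` is the sum over edges of `G`; the sum over ordered pairs of distinct vertices divided
by `2` is the sum over unordered pairs of distinct vertices of `G`. -/
noncomputable def Rf {V X : Type*} [Fintype V] (G : SimpleGraph V) (d : X → X → ℝ)
    (f : V → X) : ℝ :=
  ((gvol G : ℝ) * ((∑ u, ∑ v, if G.Adj u v then d (f u) (f v) ^ 2 else 0) / 2)) /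
    ((∑ u, ∑ v, if u ≠ v then d (f u) (f v) ^ 2 * (gdeg G u : ℝ) * (gdeg G v : ℝ) else 0) / 2)

/-- `lam G d` is `λ(G, X)`: the infimum of `R_f(G, X)` over nonconstant `f : V(G) → X`. -/
noncomputable def lam {V X : Type*} [Fintype V] (G : SimpleGraph V) (d : X → X → ℝ) : ℝ :=
  sInf {r | ∃ f : V → X, (∃ u v, f u ≠ f v) ∧ r = Rf G d f}

/-- The diameter of a finite simple graph: the maximum shortest-path distance over pairs. -/
noncomputable def gDiam {V : Type*} [Fintype V] (H : SimpleGraph V) : ℕ :=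
  Finset.univ.sup fun p : V × V => H.dist p.1 p.2

/-- The maximum degree of a finite simple graph. -/
noncomputable def gMaxDeg {V : Type*} [Fintype V] (G : SimpleGraph V) : ℕ :=
  Finset.univ.sup (gdeg G)

/-- The minimum degree of a finite simple graph. -/
noncomputable def gMinDeg {V : Type*} [Fintype V] (G : SimpleGraph V) : ℕ :=
  sInf (Set.range (gdeg G))

/-- For connected finite simple graphs `G`, `H` with `|V(H)| = k` and a
nonconstant `f : V(G) → V(H)`, the sum over unordered pairs of distinct vertices of
`d_H(f u, f v)^2 · deg u · deg v` is at most `(vol(G)² · D_H² / 2) · (1 - 1/k)`. -/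
theorem stmt_1 {V W : Type*} [Fintype V] [Fintype W]
    (G : SimpleGraph V) (H : SimpleGraph W)
    (hG : G.Connected) (hH : H.Connected)
    (f : V → W) (hf : ∃ u v, f u ≠ f v) :
    (∑ u, ∑ v, if u ≠ v then
        (H.dist (f u) (f v) : ℝ) ^ 2 * (gdeg G u : ℝ) * (gdeg G v : ℝ) else 0) / 2
      ≤ (gvol G : ℝ) ^ 2 * (gDiam H : ℝ) ^ 2 / 2 * (1 - 1 / (Fintype.card W : ℝ)) := by
  obtain ⟨u0, v0, huv0⟩ := hf
  haveI : Nonempty W := ⟨f u0⟩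
  set k : ℝ := (Fintype.card W : ℝ) with hk
  have hkpos : (0 : ℝ) < k := by
    simpa [hk] using (Nat.cast_pos.mpr Fintype.card_pos : (0:ℝ) < Fintype.card W)
  set D : ℝ := (gDiam H : ℝ) with hD
  have hDnn : 0 ≤ D := Nat.cast_nonneg _
  have hdist : ∀ a b : W, (H.dist a b : ℝ) ≤ D := by
    intro a b
    exact_mod_cast Nat.cast_le.mpr (Finset.le_sup (f := fun p : W × W => H.dist p.1 p.2)
      (Finset.mem_univ (a, b)))
  set S : W → ℝ := fun w => ∑ u, if f u = w then (gdeg G u : ℝ) else 0 with hS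
  have hSsum : ∑ w, S w = (gvol G : ℝ) := by
    rw [Finset.sum_comm]
    simp [gvol]
  -- step 1
  have step1 : (∑ u, ∑ v, if u ≠ v then
        (H.dist (f u) (f v) : ℝ) ^ 2 * (gdeg G u : ℝ) * (gdeg G v : ℝ) else 0)
      ≤ D ^ 2 * ∑ u, ∑ v, (if f u ≠ f v then (gdeg G u : ℝ) * (gdeg G v : ℝ) else 0) := by
    rw [Finset.mul_sum]
    refine Finset.sum_le_sum fun u _ => ?_
    rw [Finset.mul_sum]
    refine Finset.sum_le_sum fun v _ => ?_
    by_cases h : f u = f v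
    · by_cases huv : u = v
      · simp [huv, h]
      · simp [huv, h, SimpleGraph.dist_self]
    · have huv : u ≠ v := fun e => h (by rw [e])
      simp only [huv, h, if_true, ne_eq, not_false_eq_true]
      have h1 : (H.dist (f u) (f v) : ℝ) ^ 2 ≤ D ^ 2 := by
        have := hdist (f u) (f v)
        nlinarith [Nat.cast_nonneg (α := ℝ) (H.dist (f u) (f v))]
      have h2 : (0:ℝ) ≤ (gdeg G u : ℝ) * (gdeg G v : ℝ) := by positivity
      calc (H.dist (f u) (f v) : ℝ) ^ 2 * (gdeg G u : ℝ) * (gdeg G v : ℝ)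
          = (H.dist (f u) (f v) : ℝ) ^ 2 * ((gdeg G u : ℝ) * (gdeg G v : ℝ)) := by ring
        _ ≤ D ^ 2 * ((gdeg G u : ℝ) * (gdeg G v : ℝ)) :=
            mul_le_mul_of_nonneg_right h1 h2
  -- partition identity
  have hpart : (∑ u, ∑ v, (if f u = f v then (gdeg G u : ℝ) * (gdeg G v : ℝ) else 0))
      = ∑ w, S w ^ 2 := by
    have hsq : ∀ w, S w ^ 2 = ∑ u, ∑ v,
        (if f u = w then (gdeg G u : ℝ) else 0) * (if f v = w then (gdeg G v : ℝ) else 0) := by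
      intro w
      rw [sq, hS, Finset.sum_mul_sum]
    have key : ∀ u v : V, (if f u = f v then (gdeg G u : ℝ) * (gdeg G v : ℝ) else 0)
        = ∑ w, (if f u = w then (gdeg G u : ℝ) else 0) *
            (if f v = w then (gdeg G v : ℝ) else 0) := by
      intro u v
      by_cases h : f u = f v
      · rw [if_pos h, Finset.sum_eq_single (f u)]
        · simp [h]
        · intro w _ hw
          have : ¬ (f u = w) := fun hh => hw hh.symm
          simp [this]
        · simp
      · rw [if_neg h]
        refine (Finset.sum_eq_zero fun w _ => ?_).symm
        by_cases h1 : f u = w <;> by_cases h2 : f v = w <;> simp_all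
    simp_rw [key, hsq]
    calc ∑ u, ∑ v, ∑ w, (if f u = w then (gdeg G u : ℝ) else 0) *
            (if f v = w then (gdeg G v : ℝ) else 0)
        = ∑ u, ∑ w, ∑ v, (if f u = w then (gdeg G u : ℝ) else 0) *
            (if f v = w then (gdeg G v : ℝ) else 0) :=
          Finset.sum_congr rfl fun u _ => Finset.sum_comm
      _ = ∑ w, ∑ u, ∑ v, (if f u = w then (gdeg G u : ℝ) else 0) *
            (if f v = w then (gdeg G v : ℝ) else 0) := Finset.sum_comm
  have hsplit : (∑ u, ∑ v, (if f u ≠ f v then (gdeg G u : ℝ) * (gdeg G v : ℝ) else 0))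
      = (gvol G : ℝ) ^ 2 - ∑ w, S w ^ 2 := by
    rw [← hpart]
    have : (gvol G : ℝ) ^ 2 = ∑ u, ∑ v, (gdeg G u : ℝ) * (gdeg G v : ℝ) := by
      rw [sq]
      push_cast [gvol]
      rw [Finset.sum_mul_sum]
    rw [this, ← Finset.sum_sub_distrib]
    refine Finset.sum_congr rfl fun u _ => ?_
    rw [← Finset.sum_sub_distrib]
    refine Finset.sum_congr rfl fun v _ => ?_
    by_cases h : f u = f v <;> simp [h]
  -- Cauchy-Schwarz
  have hCS : (gvol G : ℝ) ^ 2 / k ≤ ∑ w, S w ^ 2 := by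
    have := sq_sum_le_card_mul_sum_sq (s := (Finset.univ : Finset W)) (f := S)
    rw [hSsum] at this
    rw [div_le_iff₀ hkpos]
    simpa [hk, mul_comm] using this
  have step2 : (∑ u, ∑ v, (if f u ≠ f v then (gdeg G u : ℝ) * (gdeg G v : ℝ) else 0))
      ≤ (gvol G : ℝ) ^ 2 * (1 - 1 / k) := by
    rw [hsplit]
    have : (gvol G : ℝ) ^ 2 * (1 - 1 / k) = (gvol G : ℝ) ^ 2 - (gvol G : ℝ) ^ 2 / k := by
      field_simp
    rw [this]
    linarith
  have hD2 : (0:ℝ) ≤ D ^ 2 := by positivity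
  calc (∑ u, ∑ v, if u ≠ v then
        (H.dist (f u) (f v) : ℝ) ^ 2 * (gdeg G u : ℝ) * (gdeg G v : ℝ) else 0) / 2
      ≤ D ^ 2 * ((gvol G : ℝ) ^ 2 * (1 - 1 / k)) / 2 := by
        have := mul_le_mul_of_nonneg_left step2 hD2
        linarith [step1]
    _ = (gvol G : ℝ) ^ 2 * D ^ 2 / 2 * (1 - 1 / k) := by ring
end

section
/- Let G be a finite simple graph with at least two vertices in which every vertex has at least one neighbor, and let X be a metric space with at least two points. Then λ(G, X) = 0 if and only if G is disconnected. -/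
open scoped Classical
open Finset

section Aux

variable {V X : Type*} [Fintype V] [MetricSpace X]

lemma gdeg_pos {G : SimpleGraph V} {v : V} (h : ∃ u, G.Adj v u) : 0 < gdeg G v := by
  obtain ⟨u, hu⟩ := h
  exact (Set.ncard_pos (Set.toFinite _)).mpr ⟨u, hu⟩

lemma edgeSum_nonneg (G : SimpleGraph V) (f : V → X) :
    0 ≤ ∑ u, ∑ v, if G.Adj u v then dist (f u) (f v) ^ 2 else 0 :=
  Finset.sum_nonneg fun _ _ => Finset.sum_nonneg fun _ _ => by
    split_ifs <;> positivity

lemma pairSum_nonneg (G : SimpleGraph V) (f : V → X) :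
    0 ≤ ∑ u, ∑ v, if u ≠ v then
      dist (f u) (f v) ^ 2 * (gdeg G u : ℝ) * (gdeg G v : ℝ) else 0 :=
  Finset.sum_nonneg fun _ _ => Finset.sum_nonneg fun _ _ => by
    split_ifs <;> positivity

lemma Rf_nonneg (G : SimpleGraph V) (f : V → X) :
    0 ≤ Rf G (fun x y : X => dist x y) f := by
  unfold Rf
  apply div_nonneg
  · exact mul_nonneg (Nat.cast_nonneg _) (by linarith [edgeSum_nonneg G f])
  · linarith [pairSum_nonneg G f]

lemma dist_le_walk_sum {G : SimpleGraph V} (f : V → X) {u v : V} (p : G.Walk u v) :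
    dist (f u) (f v) ≤ (p.darts.map fun d => dist (f d.toProd.1) (f d.toProd.2)).sum := by
  induction p with
  | nil => simp
  | cons h q ih =>
    simp only [SimpleGraph.Walk.darts_cons, List.map_cons, List.sum_cons]
    exact (dist_triangle _ (f _) _).trans (by exact add_le_add_right ih _)

lemma pair_bound {G : SimpleGraph V} (hc : G.Connected) (f : V → X) (u v : V) :
    dist (f u) (f v) ^ 2 ≤ (gDiam G : ℝ) *
      ∑ a, ∑ b, if G.Adj a b then dist (f a) (f b) ^ 2 else 0 := by
  classical
  obtain ⟨p, hp⟩ := hc.exists_walk_length_eq_dist u v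
  have hpath : p.IsPath := p.isPath_of_length_eq_dist hp
  have hnd : p.darts.Nodup :=
    SimpleGraph.Walk.darts_nodup_of_support_nodup hpath.support_nodup
  set s : Finset G.Dart := p.darts.toFinset with hs
  have hcard : s.card = p.length := by
    rw [hs, List.toFinset_card_of_nodup hnd, SimpleGraph.Walk.length_darts]
  have h1 : dist (f u) (f v) ≤ ∑ d ∈ s, dist (f d.toProd.1) (f d.toProd.2) := by
    rw [hs, List.sum_toFinset _ hnd]
    exact dist_le_walk_sum f p
  have h2 : dist (f u) (f v) ^ 2
      ≤ (∑ d ∈ s, dist (f d.toProd.1) (f d.toProd.2)) ^ 2 :=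
    pow_le_pow_left₀ dist_nonneg h1 2
  have h3 : (∑ d ∈ s, dist (f d.toProd.1) (f d.toProd.2)) ^ 2
      ≤ (s.card : ℝ) * ∑ d ∈ s, dist (f d.toProd.1) (f d.toProd.2) ^ 2 :=
    sq_sum_le_card_mul_sum_sq
  have h4 : (∑ d ∈ s, dist (f d.toProd.1) (f d.toProd.2) ^ 2)
      ≤ ∑ a, ∑ b, if G.Adj a b then dist (f a) (f b) ^ 2 else 0 := by
    have himg : ∑ d ∈ s, dist (f d.toProd.1) (f d.toProd.2) ^ 2
        = ∑ pr ∈ s.image SimpleGraph.Dart.toProd,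
            (if G.Adj pr.1 pr.2 then dist (f pr.1) (f pr.2) ^ 2 else 0) := by
      rw [Finset.sum_image (fun a _ b _ h => SimpleGraph.Dart.toProd_injective h)]
      exact Finset.sum_congr rfl fun d _ => by rw [if_pos d.adj]
    rw [himg, ← Fintype.sum_prod_type']
    exact Finset.sum_le_sum_of_subset_of_nonneg (Finset.subset_univ _)
      (fun pr _ _ => by split_ifs <;> positivity)
  have hlen : (p.length : ℝ) ≤ (gDiam G : ℝ) := by
    have : G.dist u v ≤ gDiam G :=
      Finset.le_sup (f := fun q : V × V => G.dist q.1 q.2) (Finset.mem_univ (u, v))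
    exact_mod_cast hp ▸ this
  calc dist (f u) (f v) ^ 2
      ≤ (s.card : ℝ) * ∑ d ∈ s, dist (f d.toProd.1) (f d.toProd.2) ^ 2 := h2.trans h3
    _ ≤ (gDiam G : ℝ) * ∑ a, ∑ b, if G.Adj a b then dist (f a) (f b) ^ 2 else 0 := by
        apply mul_le_mul (by rw [hcard]; exact hlen) h4
          (Finset.sum_nonneg fun _ _ => by positivity) (Nat.cast_nonneg _)

end Aux

/-- For a finite simple graph `G` with at least two vertices in which every
vertex has a neighbor, and a metric space `X` with at least two points,
`λ(G, X) = 0` iff `G` is disconnected. -/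
theorem stmt_2 {V : Type*} [Fintype V] (G : SimpleGraph V)
    (hV : 2 ≤ Fintype.card V) (hdeg : ∀ v : V, ∃ u, G.Adj v u)
    (X : Type*) [MetricSpace X] (hX : ∃ a b : X, a ≠ b) :
    lam G (fun x y : X => dist x y) = 0 ↔ ¬ G.Connected := by
  classical
  obtain ⟨a, b, hab⟩ := hX
  obtain ⟨x0, x1, hx01⟩ := Fintype.exists_pair_of_one_lt_card (by omega) (α := V)
  set S : Set ℝ := {r | ∃ f : V → X, (∃ u v, f u ≠ f v) ∧ r = Rf G (fun x y : X => dist x y) f}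
    with hSdef
  have hSba : BddBelow S := ⟨0, fun r hr => by
    obtain ⟨f, _, rfl⟩ := hr; exact Rf_nonneg G f⟩
  constructor
  · intro h0 hconn
    set D : ℝ := (gDiam G : ℝ) with hDdef
    set W : ℝ := (gvol G : ℝ) with hWdef
    have hW : 0 < W := by
      have : 0 < gvol G := by
        have hx : 0 < gdeg G x0 := gdeg_pos (hdeg x0)
        exact Finset.sum_pos' (fun _ _ => Nat.zero_le _) ⟨x0, Finset.mem_univ _, hx⟩
      rw [hWdef]; exact_mod_cast this
    have hD : 0 < D := by
      have h1 : 0 < G.dist x0 x1 := hconn.pos_dist_of_ne hx01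
      have h2 : G.dist x0 x1 ≤ gDiam G :=
        Finset.le_sup (f := fun q : V × V => G.dist q.1 q.2) (Finset.mem_univ (x0, x1))
      have : 0 < gDiam G := lt_of_lt_of_le h1 h2
      rw [hDdef]; exact_mod_cast this
    -- lower bound on every element of S
    have key : ∀ r ∈ S, 1 / (D * W) ≤ r := by
      rintro r ⟨f, ⟨u0, v0, hne⟩, rfl⟩
      set A : ℝ := ∑ u, ∑ v, if G.Adj u v then dist (f u) (f v) ^ 2 else 0 with hAdef
      set P : ℝ := ∑ u, ∑ v, if u ≠ v then
          dist (f u) (f v) ^ 2 * (gdeg G u : ℝ) * (gdeg G v : ℝ) else 0 with hPdef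
      have hA0 : 0 ≤ A := edgeSum_nonneg G f
      have hu0v0 : u0 ≠ v0 := fun h => hne (by rw [h])
      have hPpos : 0 < P := by
        rw [hPdef]
        apply Finset.sum_pos' (fun _ _ => Finset.sum_nonneg fun _ _ => by
          split_ifs <;> positivity)
        refine ⟨u0, Finset.mem_univ _, Finset.sum_pos'
          (fun _ _ => by split_ifs <;> positivity) ⟨v0, Finset.mem_univ _, ?_⟩⟩
        rw [if_pos hu0v0]
        have hd : 0 < dist (f u0) (f v0) := dist_pos.mpr hne
        have h1 : (0:ℝ) < gdeg G u0 := by exact_mod_cast gdeg_pos (hdeg u0)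
        have h2 : (0:ℝ) < gdeg G v0 := by exact_mod_cast gdeg_pos (hdeg v0)
        positivity
      have hPle : P ≤ D * A * (W * W) := by
        have hWsum : W = ∑ v, (gdeg G v : ℝ) := by
          rw [hWdef, gvol]; push_cast; rfl
        have step : P ≤ ∑ u, ∑ v, (D * A) * ((gdeg G u : ℝ) * (gdeg G v : ℝ)) := by
          rw [hPdef]
          refine Finset.sum_le_sum fun u _ => Finset.sum_le_sum fun v _ => ?_
          split_ifs with h
          · have hb := pair_bound hconn f u v
            have h1 : (0:ℝ) ≤ gdeg G u := Nat.cast_nonneg _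
            have h2 : (0:ℝ) ≤ gdeg G v := Nat.cast_nonneg _
            calc dist (f u) (f v) ^ 2 * (gdeg G u : ℝ) * (gdeg G v : ℝ)
                ≤ (D * A) * (gdeg G u : ℝ) * (gdeg G v : ℝ) := by
                  apply mul_le_mul_of_nonneg_right _ h2
                  exact mul_le_mul_of_nonneg_right hb h1
              _ = (D * A) * ((gdeg G u : ℝ) * (gdeg G v : ℝ)) := by ring
          · positivity
        calc P ≤ ∑ u, ∑ v, (D * A) * ((gdeg G u : ℝ) * (gdeg G v : ℝ)) := step
          _ = D * A * (W * W) := by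
              simp_rw [← Finset.mul_sum, ← Finset.sum_mul, hWsum]
      have hApos : 0 < A := by
        rcases hA0.lt_or_eq with h | h
        · exact h
        · exfalso
          have : P ≤ 0 := by rw [← h] at hPle; simpa using hPle
          linarith
      have hRf : Rf G (fun x y : X => dist x y) f = W * A / P := by
        have hP0 : P ≠ 0 := ne_of_gt hPpos
        unfold Rf
        rw [← hAdef, ← hPdef, ← hWdef]
        field_simp
      rw [hRf]
      have hbig : 0 < D * A * (W * W) := by positivity
      calc 1 / (D * W) = W * A / (D * A * (W * W)) := by
            field_simp
        _ ≤ W * A / P := by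
            apply div_le_div_of_nonneg_left (by positivity) hPpos hPle
    have hmem : ∃ r, r ∈ S := by
      refine ⟨_, ⟨fun w => if w = x0 then a else b, ⟨x0, x1, ?_⟩, rfl⟩⟩
      simp [hx01, Ne.symm hx01, hab]
    have hge : 1 / (D * W) ≤ lam G (fun x y : X => dist x y) := by
      rw [lam, ← hSdef]
      exact le_csInf hmem key
    rw [h0] at hge
    have : 0 < 1 / (D * W) := by positivity
    linarith
  · intro hnc
    have hne : Nonempty V := Fintype.card_pos_iff.mp (by omega)
    rw [SimpleGraph.connected_iff] at hnc
    push_neg at hnc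
    have hpre : ¬ G.Preconnected := fun h => (hnc h).elim hne.some
    rw [SimpleGraph.Preconnected] at hpre
    push_neg at hpre
    obtain ⟨u, v, huv⟩ := hpre
    set f : V → X := fun w => if G.Reachable u w then a else b with hf
    have hfu : f u = a := if_pos (SimpleGraph.Reachable.refl u)
    have hfv : f v = b := if_neg huv
    have hnonconst : f u ≠ f v := by rw [hfu, hfv]; exact hab
    have hedge : ∀ x y : V, G.Adj x y → f x = f y := by
      intro x y hxy
      by_cases hr : G.Reachable u x
      · rw [hf]
        simp only
        rw [if_pos hr, if_pos (hr.trans hxy.reachable)]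
      · rw [hf]
        simp only
        rw [if_neg hr, if_neg fun h => hr (h.trans hxy.symm.reachable)]
    have hA : (∑ x, ∑ y, if G.Adj x y then dist (f x) (f y) ^ 2 else 0 : ℝ) = 0 := by
      refine Finset.sum_eq_zero fun x _ => Finset.sum_eq_zero fun y _ => ?_
      split_ifs with h
      · rw [hedge x y h, dist_self]; ring
      · rfl
    have hRf0 : Rf G (fun x y : X => dist x y) f = 0 := by
      unfold Rf
      rw [hA]
      simp
    have h0S : (0:ℝ) ∈ S := ⟨f, ⟨u, v, hnonconst⟩, hRf0.symm⟩
    have hlb : ∀ r ∈ S, (0:ℝ) ≤ r := fun r hr => by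
      obtain ⟨g, _, rfl⟩ := hr; exact Rf_nonneg G g
    rw [lam, ← hSdef]
    exact le_antisymm (csInf_le hSba h0S) (le_csInf ⟨0, h0S⟩ hlb)
end

section
/- Let G be a connected finite simple graph on n ≥ 2 vertices with m edges, maximum degree Δ, and diameter D, and let X be a metric space with at least two points. Then λ(G, X) ≥ vol(G) / (Δ² · (1 + S_G)), where S_G = (n(n−1)/2 − m) · D². -/
open scoped Classical
open Finset

lemma gdeg_eq_degree {V : Type*} [Fintype V] (G : SimpleGraph V) (v : V) :
    gdeg G v = G.degree v := by
  rw [gdeg, Set.ncard_eq_toFinset_card', ← SimpleGraph.card_neighborSet_eq_degree,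
    Set.toFinset_card]

lemma walk_dist_le {V X : Type*} [Fintype V] {G : SimpleGraph V} [MetricSpace X]
    (f : V → X) (B : ℝ) (hB : 0 ≤ B)
    (hadj : ∀ a b : V, G.Adj a b → dist (f a) (f b) ≤ B) :
    ∀ {u v : V} (p : G.Walk u v), dist (f u) (f v) ≤ p.length * B := by
  intro u v p
  induction p with
  | nil => simp
  | cons h q ih =>
    calc dist (f _) (f _) ≤ dist (f _) (f _) + dist (f _) (f _) := dist_triangle _ _ _
    _ ≤ B + q.length * B := add_le_add (hadj _ _ h) ih
    _ = (q.length + 1) * B := by ring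
    _ = _ := by push_cast [SimpleGraph.Walk.length_cons]; ring

/-- For a connected finite simple graph `G` on `n ≥ 2` vertices with `m` edges,
maximum degree `Δ` and diameter `D`, and a metric space `X` with at least two points,
`λ(G, X) ≥ vol(G) / (Δ² (1 + S_G))` where `S_G = (n(n-1)/2 - m) D²`. -/
theorem stmt_3 {V : Type*} [Fintype V] (G : SimpleGraph V)
    (hG : G.Connected) (hV : 2 ≤ Fintype.card V)
    (X : Type*) [MetricSpace X] (hX : ∃ a b : X, a ≠ b) :
    (gvol G : ℝ) / ((gMaxDeg G : ℝ) ^ 2 *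
        (1 + ((Fintype.card V : ℝ) * ((Fintype.card V : ℝ) - 1) / 2 - (G.edgeSet.ncard : ℝ))
            * (gDiam G : ℝ) ^ 2))
      ≤ lam G (fun x y : X => dist x y) := by
  classical
  obtain ⟨a, b, hab⟩ := hX
  obtain ⟨u₀, v₀, huv₀⟩ := Fintype.exists_pair_of_one_lt_card (by omega : 1 < Fintype.card V)
  set n : ℝ := (Fintype.card V : ℝ) with hn
  set Δ : ℝ := (gMaxDeg G : ℝ) with hΔdef
  set D : ℝ := (gDiam G : ℝ) with hDdef
  set m : ℝ := (G.edgeSet.ncard : ℝ) with hm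
  set A : ℝ := Δ ^ 2 * (1 + (n * (n - 1) / 2 - m) * D ^ 2) with hA
  -- basic degree facts
  have hdeg1 : ∀ v : V, 1 ≤ gdeg G v := by
    intro v
    obtain ⟨w, hw⟩ := Fintype.exists_ne_of_one_lt_card (by omega) v
    rw [gdeg_eq_degree]
    rw [Nat.one_le_iff_ne_zero, ← Nat.pos_iff_ne_zero, SimpleGraph.degree_pos_iff_exists_adj]
    obtain ⟨p⟩ := hG v w
    cases p with
    | nil => exact absurd rfl hw.symm
    | cons h q => exact ⟨_, h⟩
  have hΔnat : ∀ v : V, gdeg G v ≤ gMaxDeg G := fun v => Finset.le_sup (mem_univ v)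
  have hΔ1 : (1 : ℝ) ≤ Δ := by
    have h := le_trans (hdeg1 u₀) (hΔnat u₀)
    rw [hΔdef]; exact_mod_cast h
  have hΔ : ∀ v : V, (gdeg G v : ℝ) ≤ Δ := fun v => by
    rw [hΔdef]; exact_mod_cast hΔnat v
  have hDnat : ∀ u v : V, G.dist u v ≤ gDiam G := fun u v =>
    Finset.le_sup (f := fun p : V × V => G.dist p.1 p.2) (mem_univ (u, v))
  have hD : ∀ u v : V, (G.dist u v : ℝ) ≤ D := fun u v => by
    rw [hDdef]; exact_mod_cast hDnat u v
  have hD0 : (0 : ℝ) ≤ D := by rw [hDdef]; positivity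
  -- vol = 2m and deg bounds
  have hvol2m : (gvol G : ℝ) = 2 * m := by
    rw [gvol, hm, Set.ncard_eq_toFinset_card']
    push_cast [gdeg_eq_degree]
    rw [show (Set.toFinset G.edgeSet) = G.edgeFinset from rfl]
    exact_mod_cast congrArg (Nat.cast : ℕ → ℝ) (G.sum_degrees_eq_twice_card_edges)
  have hvolpos : (0 : ℝ) < (gvol G : ℝ) := by
    have : 1 ≤ gvol G := le_trans (hdeg1 u₀) (Finset.single_le_sum (f := fun v => gdeg G v)
      (fun _ _ => Nat.zero_le _) (mem_univ u₀))
    exact_mod_cast this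
  -- m ≤ n(n-1)/2
  have hmle : m ≤ n * (n - 1) / 2 := by
    have hdle : ∀ v : V, (gdeg G v : ℝ) ≤ n - 1 := by
      intro v
      have h1 : G.degree v + 1 ≤ Fintype.card V := G.degree_lt_card_verts v
      rw [gdeg_eq_degree]
      have h2 : (G.degree v : ℝ) + 1 ≤ n := by rw [hn]; exact_mod_cast h1
      linarith
    have : (gvol G : ℝ) ≤ n * (n - 1) := by
      rw [gvol]
      push_cast
      calc ∑ v, (gdeg G v : ℝ) ≤ ∑ _v : V, (n - 1) := Finset.sum_le_sum fun v _ => hdle v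
      _ = n * (n - 1) := by rw [Finset.sum_const, card_univ]; push_cast; ring
    linarith [hvol2m ▸ this]
  have hApos : (0 : ℝ) < A := by
    have h1 : (0:ℝ) ≤ (n * (n - 1) / 2 - m) * D ^ 2 := by
      apply mul_nonneg (by linarith) (by positivity)
    rw [hA]; nlinarith
  -- main bound on each Rf value
  apply le_csInf
  · exact ⟨_, fun v => if v = u₀ then a else b, ⟨u₀, v₀, by
      simp [huv₀, huv₀.symm, hab]⟩, rfl⟩
  rintro r ⟨f, ⟨u₁, v₁, hf⟩, rfl⟩
  set d : X → X → ℝ := fun x y => dist x y with hd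
  set E2 : ℝ := ∑ u, ∑ v, if G.Adj u v then d (f u) (f v) ^ 2 else 0 with hE2
  set P2 : ℝ := ∑ u, ∑ v, if u ≠ v then d (f u) (f v) ^ 2 * (gdeg G u : ℝ) * (gdeg G v : ℝ)
      else 0 with hP2
  have hE2nonneg : 0 ≤ E2 := by
    apply Finset.sum_nonneg; intro u _; apply Finset.sum_nonneg; intro v _
    split_ifs <;> positivity
  -- each edge term is at most E2/2
  have hedge : ∀ a b : V, G.Adj a b → d (f a) (f b) ^ 2 ≤ E2 / 2 := by
    intro x y hxy
    have hxyne : x ≠ y := hxy.ne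
    have hsub : ({(x, y), (y, x)} : Finset (V × V)) ⊆ univ ×ˢ univ := by
      intro p _; simp
    have hsum : E2 = ∑ p ∈ univ ×ˢ univ,
        (if G.Adj p.1 p.2 then d (f p.1) (f p.2) ^ 2 else 0) := by
      rw [hE2, Finset.sum_product]
    have hle : ∑ p ∈ ({(x, y), (y, x)} : Finset (V × V)),
        (if G.Adj p.1 p.2 then d (f p.1) (f p.2) ^ 2 else 0) ≤ E2 := by
      rw [hsum]
      apply Finset.sum_le_sum_of_subset_of_nonneg hsub
      intro p _ _; split_ifs <;> positivity
    rw [Finset.sum_pair (by simp [hxyne, Prod.ext_iff])] at hle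
    simp only [hxy, hxy.symm, if_true] at hle
    have : d (f y) (f x) = d (f x) (f y) := dist_comm _ _
    rw [this] at hle
    linarith
  set B : ℝ := Real.sqrt (E2 / 2) with hB
  have hB0 : 0 ≤ B := Real.sqrt_nonneg _
  have hBsq : B ^ 2 = E2 / 2 := Real.sq_sqrt (by linarith)
  have hadjB : ∀ a b : V, G.Adj a b → dist (f a) (f b) ≤ B := by
    intro x y hxy
    rw [hB]
    exact Real.le_sqrt_of_sq_le (hedge x y hxy)
  -- distance bound for arbitrary pairs
  have hfar : ∀ u v : V, u ≠ v → d (f u) (f v) ^ 2 ≤ D ^ 2 * (E2 / 2) := by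
    intro u v huv
    obtain ⟨p, hp⟩ := hG.exists_walk_length_eq_dist u v
    have h1 : dist (f u) (f v) ≤ (p.length : ℝ) * B := walk_dist_le f B hB0 hadjB p
    have h2 : (p.length : ℝ) ≤ D := hp ▸ hD u v
    have h3 : dist (f u) (f v) ≤ D * B :=
      le_trans h1 (mul_le_mul_of_nonneg_right h2 hB0)
    have h4 : d (f u) (f v) ^ 2 ≤ (D * B) ^ 2 := by
      have := dist_nonneg (x := f u) (y := f v)
      simp only [hd]
      nlinarith
    calc d (f u) (f v) ^ 2 ≤ (D * B) ^ 2 := h4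
    _ = D ^ 2 * B ^ 2 := by ring
    _ = D ^ 2 * (E2 / 2) := by rw [hBsq]
  -- counting: number of ordered distinct non-adjacent pairs
  have hcount : (∑ u, ∑ v, if u ≠ v ∧ ¬ G.Adj u v then (1 : ℝ) else 0)
      = n * (n - 1) - (gvol G : ℝ) := by
    have hsplit : ∀ u v : V, (if u ≠ v ∧ ¬ G.Adj u v then (1 : ℝ) else 0)
        = (if u ≠ v then (1:ℝ) else 0) - (if G.Adj u v then (1:ℝ) else 0) := by
      intro u v
      by_cases h1 : G.Adj u v
      · simp [h1, h1.ne]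
      · by_cases h2 : u ≠ v <;> simp [h1, h2]
    simp only [hsplit, Finset.sum_sub_distrib]
    have hne : (∑ u : V, ∑ v : V, if u ≠ v then (1 : ℝ) else 0) = n * (n - 1) := by
      have : ∀ u : V, (∑ v : V, if u ≠ v then (1:ℝ) else 0) = n - 1 := by
        intro u
        have : (∑ v : V, if u ≠ v then (1:ℝ) else 0)
            = ∑ v : V, ((1:ℝ) - if u = v then 1 else 0) := by
          apply Finset.sum_congr rfl; intro v _; by_cases h : u = v <;> simp [h]
        rw [this, Finset.sum_sub_distrib]
        have h1 : (∑ v : V, if u = v then (1:ℝ) else 0) = 1 := by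
          rw [Finset.sum_ite_eq]; simp
        rw [h1, Finset.sum_const, card_univ]; simp [hn]
      simp only [this, Finset.sum_const, card_univ, nsmul_eq_mul, hn]
    have hadjc : (∑ u : V, ∑ v : V, if G.Adj u v then (1 : ℝ) else 0) = (gvol G : ℝ) := by
      have : ∀ u : V, (∑ v : V, if G.Adj u v then (1:ℝ) else 0) = (gdeg G u : ℝ) := by
        intro u
        rw [Finset.sum_boole, gdeg_eq_degree, SimpleGraph.degree]
        congr 2
        ext v; simp [SimpleGraph.mem_neighborFinset]
      simp only [this, gvol]; push_cast; ring
    rw [hne, hadjc]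
  -- P2 ≤ A * E2
  have hkey : P2 ≤ A * E2 := by
    have hstep1 : P2 ≤ Δ ^ 2 * ∑ u, ∑ v, (if u ≠ v then d (f u) (f v) ^ 2 else 0) := by
      rw [Finset.mul_sum]
      apply Finset.sum_le_sum; intro u _
      rw [Finset.mul_sum]
      apply Finset.sum_le_sum; intro v _
      split_ifs with h
      · have h1 := hΔ u; have h2 := hΔ v
        have hd1 : (0:ℝ) ≤ (gdeg G u : ℝ) := Nat.cast_nonneg _
        have hd2 : (0:ℝ) ≤ (gdeg G v : ℝ) := Nat.cast_nonneg _
        have hdd : (0:ℝ) ≤ d (f u) (f v) ^ 2 := by positivity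
        have hmm : (gdeg G u : ℝ) * (gdeg G v : ℝ) ≤ Δ * Δ :=
          mul_le_mul h1 h2 hd2 (le_trans hd1 h1)
        calc d (f u) (f v) ^ 2 * (gdeg G u : ℝ) * (gdeg G v : ℝ)
            = d (f u) (f v) ^ 2 * ((gdeg G u : ℝ) * (gdeg G v : ℝ)) := by ring
        _ ≤ d (f u) (f v) ^ 2 * (Δ * Δ) := mul_le_mul_of_nonneg_left hmm hdd
        _ = Δ ^ 2 * d (f u) (f v) ^ 2 := by ring
      · simp
    have hstep2 : (∑ u, ∑ v : V, (if u ≠ v then d (f u) (f v) ^ 2 else 0))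
        ≤ E2 + (n * (n - 1) - (gvol G : ℝ)) * (D ^ 2 * (E2 / 2)) := by
      have htermwise : ∀ u v : V, (if u ≠ v then d (f u) (f v) ^ 2 else 0)
          ≤ (if G.Adj u v then d (f u) (f v) ^ 2 else 0)
            + (if u ≠ v ∧ ¬ G.Adj u v then (1:ℝ) else 0) * (D ^ 2 * (E2 / 2)) := by
        intro u v
        by_cases h1 : G.Adj u v
        · have hne : u ≠ v := h1.ne
          have e1 : (if u ≠ v ∧ ¬ G.Adj u v then (1:ℝ) else 0) = 0 := by simp [h1]
          rw [if_pos hne, if_pos h1, e1, zero_mul, add_zero]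
        · by_cases h2 : u ≠ v
          · have := hfar u v h2
            rw [if_pos h2, if_neg h1, if_pos ⟨h2, h1⟩, zero_add, one_mul]
            linarith
          · simp [h1, h2]
      calc (∑ u, ∑ v : V, (if u ≠ v then d (f u) (f v) ^ 2 else 0))
          ≤ ∑ u, ∑ v : V, ((if G.Adj u v then d (f u) (f v) ^ 2 else 0)
            + (if u ≠ v ∧ ¬ G.Adj u v then (1:ℝ) else 0) * (D ^ 2 * (E2 / 2))) := by
            apply Finset.sum_le_sum; intro u _
            apply Finset.sum_le_sum; intro v _
            exact htermwise u v
      _ = E2 + (∑ u, ∑ v : V, (if u ≠ v ∧ ¬ G.Adj u v then (1:ℝ) else 0)) * (D ^ 2 * (E2 / 2)) := by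
            rw [hE2]
            simp only [Finset.sum_add_distrib, ← Finset.sum_mul]
      _ = E2 + (n * (n - 1) - (gvol G : ℝ)) * (D ^ 2 * (E2 / 2)) := by rw [hcount]
    calc P2 ≤ Δ ^ 2 * ∑ u, ∑ v, (if u ≠ v then d (f u) (f v) ^ 2 else 0) := hstep1
    _ ≤ Δ ^ 2 * (E2 + (n * (n - 1) - (gvol G : ℝ)) * (D ^ 2 * (E2 / 2))) := by
        apply mul_le_mul_of_nonneg_left hstep2 (by positivity)
    _ = A * E2 := by rw [hA, hvol2m]; ring
  -- P2 > 0
  have hP2pos : 0 < P2 := by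
    have hne : u₁ ≠ v₁ := fun h => hf (by rw [h])
    have hterm : (0:ℝ) < (if u₁ ≠ v₁ then d (f u₁) (f v₁) ^ 2 * (gdeg G u₁ : ℝ)
        * (gdeg G v₁ : ℝ) else 0) := by
      rw [if_pos hne]
      have hdpos : 0 < d (f u₁) (f v₁) := dist_pos.mpr hf
      have h1 : (0:ℝ) < (gdeg G u₁ : ℝ) := by exact_mod_cast hdeg1 u₁
      have h2 : (0:ℝ) < (gdeg G v₁ : ℝ) := by exact_mod_cast hdeg1 v₁
      positivity
    have hinnernn : ∀ u : V, (0:ℝ) ≤ ∑ v, (if u ≠ v then d (f u) (f v) ^ 2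
        * (gdeg G u : ℝ) * (gdeg G v : ℝ) else 0) := by
      intro u
      apply Finset.sum_nonneg; intro v _; split_ifs <;> positivity
    have hinner : (0:ℝ) < ∑ v, (if u₁ ≠ v then d (f u₁) (f v) ^ 2
        * (gdeg G u₁ : ℝ) * (gdeg G v : ℝ) else 0) := by
      apply Finset.sum_pos' (fun v _ => by split_ifs <;> positivity)
      exact ⟨v₁, mem_univ _, hterm.le.lt_of_ne' (by exact hterm.ne')⟩
    rw [hP2]
    exact Finset.sum_pos' (fun u _ => hinnernn u) ⟨u₁, mem_univ _, hinner⟩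
  -- conclude
  rw [Rf]
  rw [div_le_div_iff₀ hApos (by linarith : (0:ℝ) < P2 / 2)]
  have hE2P : (gvol G : ℝ) * (P2 / 2) ≤ (gvol G : ℝ) * (A * E2 / 2) := by
    apply mul_le_mul_of_nonneg_left _ (le_of_lt hvolpos)
    linarith
  calc (gvol G : ℝ) * (P2 / 2) ≤ (gvol G : ℝ) * (A * E2 / 2) := hE2P
  _ = (gvol G : ℝ) * (E2 / 2) * A := by ring
end

section
/- There exists an absolute constant C > 0 such that for every finite metric space X with at least two points and every connected finite simple graph G with at least two vertices, (C / (log |X|)²) · λ(G, ℝ) ≤ λ(G, X), where |X| is the number of points of X and λ(G, ℝ) is taken with respect to the usual metric on the real numbers. -/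
open scoped Classical
open Finset

section measure
variable {α : Type*} [Fintype α]

lemma sum_pow_card (W : Finset α) (p q : ℝ) :
    ∑ A ∈ W.powerset, p ^ A.card * q ^ (W.card - A.card) = (p + q) ^ W.card := by
  rw [← Finset.prod_const, Finset.prod_add]
  refine Finset.sum_congr rfl fun A hA => ?_
  rw [Finset.prod_const, Finset.prod_const, Finset.card_sdiff_of_subset (Finset.mem_powerset.mp hA)]

/-- Bernoulli(p) product measure weight of a subset. -/
noncomputable def mu (p : ℝ) (A : Finset α) : ℝ :=
  p ^ A.card * (1 - p) ^ (Fintype.card α - A.card)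

lemma mu_nonneg {p : ℝ} (hp0 : 0 ≤ p) (hp1 : p ≤ 1) (A : Finset α) : 0 ≤ mu p A := by
  have h1 : (0:ℝ) ≤ 1 - p := by linarith
  unfold mu
  exact mul_nonneg (pow_nonneg hp0 _) (pow_nonneg h1 _)

lemma sum_mu (p : ℝ) : ∑ A ∈ (univ : Finset α).powerset, mu p A = 1 := by
  unfold mu
  rw [show (Fintype.card α) = (univ : Finset α).card from rfl, sum_pow_card]
  simp

lemma sum_mu_miss (p : ℝ) (R : Finset α) :
    ∑ A ∈ (univ : Finset α).powerset.filter (fun A => A ∩ R = ∅), mu p A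
      = (1 - p) ^ R.card := by
  have hset : (univ : Finset α).powerset.filter (fun A => A ∩ R = ∅) = (univ \ R).powerset := by
    ext A
    simp only [Finset.mem_filter, Finset.mem_powerset, Finset.subset_sdiff]
    constructor
    · rintro ⟨h1, h2⟩; exact ⟨h1, Finset.disjoint_iff_inter_eq_empty.mpr h2⟩
    · rintro ⟨h1, h2⟩; exact ⟨h1, Finset.disjoint_iff_inter_eq_empty.mp h2⟩
  rw [hset]
  have hcard : (univ \ R).card = Fintype.card α - R.card := by
    rw [Finset.card_sdiff_of_subset (Finset.subset_univ R)]; rfl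
  have : ∀ A ∈ (univ \ R).powerset, mu p A
      = (1 - p) ^ R.card * (p ^ A.card * (1 - p) ^ ((univ \ R).card - A.card)) := by
    intro A hA
    have hAW : A ⊆ univ \ R := Finset.mem_powerset.mp hA
    have hAc : A.card ≤ (univ \ R).card := Finset.card_le_card hAW
    have hRc : R.card ≤ Fintype.card α := by
      simpa using Finset.card_le_card (Finset.subset_univ R)
    unfold mu
    rw [show (1 - p) ^ #R * (p ^ #A * (1 - p) ^ (#(univ \ R) - #A))
        = p ^ #A * ((1 - p) ^ #R * (1 - p) ^ (#(univ \ R) - #A)) by ring, ← pow_add]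
    congr 2
    omega
  rw [Finset.sum_congr rfl this, ← Finset.mul_sum, sum_pow_card]
  simp

end measure

section event
variable {α : Type*} [Fintype α]

lemma sum_mu_event (p : ℝ) (S T : Finset α) (hd : Disjoint S T) :
    ∑ A ∈ (univ : Finset α).powerset.filter (fun A => A ∩ S = ∅ ∧ (A ∩ T).Nonempty), mu p A
      = (1 - p) ^ S.card * (1 - (1 - p) ^ T.card) := by
  have hsplit := Finset.sum_filter_add_sum_filter_not
    ((univ : Finset α).powerset.filter (fun A => A ∩ S = ∅))
    (fun A => (A ∩ T).Nonempty) (mu p)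
  rw [Finset.filter_filter, Finset.filter_filter] at hsplit
  have h2 : ((univ : Finset α).powerset.filter (fun A => A ∩ S = ∅ ∧ ¬(A ∩ T).Nonempty))
      = (univ : Finset α).powerset.filter (fun A => A ∩ (S ∪ T) = ∅) := by
    apply Finset.filter_congr
    intro A _
    rw [Finset.not_nonempty_iff_eq_empty, Finset.inter_union_distrib_left,
      Finset.union_eq_empty]
  rw [h2, sum_mu_miss, sum_mu_miss] at hsplit
  have h3 : (S ∪ T).card = S.card + T.card := Finset.card_union_of_disjoint hd
  have h4 : ((1:ℝ) - p) ^ (S.card + T.card) = (1-p)^S.card * (1-p)^T.card := pow_add _ _ _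
  rw [h3, h4] at hsplit
  linarith

lemma exp_le_one_sub {p : ℝ} (hp0 : 0 < p) (hp1 : p ≤ 1/2) : Real.exp (-(2*p)) ≤ 1 - p := by
  have h1 := Real.add_one_le_exp (2*p)
  have h2 : Real.exp (-(2*p)) = (Real.exp (2*p))⁻¹ := by
    rw [← Real.exp_neg]
  have h3 : (0:ℝ) < Real.exp (2*p) := Real.exp_pos _
  rw [h2]
  rw [inv_le_iff_one_le_mul₀ h3]
  nlinarith [Real.add_one_le_exp (2*p)]

lemma one_sub_le_exp {p : ℝ} : 1 - p ≤ Real.exp (-p) := by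
  have := Real.add_one_le_exp (-p)
  linarith

lemma event_prob_ge (t : ℕ) (S T : Finset α) (hd : Disjoint S T)
    (hS : S.card ≤ 2^(t+1)) (hT : 2^t ≤ T.card) :
    Real.exp (-2) * (1 - Real.exp (-2⁻¹))
      ≤ ∑ A ∈ (univ : Finset α).powerset.filter
          (fun A => A ∩ S = ∅ ∧ (A ∩ T).Nonempty), mu ((1/2:ℝ)^(t+1)) A := by
  set p : ℝ := (1/2:ℝ)^(t+1) with hp
  have hp0 : 0 < p := by positivity
  have hp1 : p ≤ 1/2 := by
    rw [hp]
    calc ((1:ℝ)/2)^(t+1) ≤ (1/2)^1 := by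
          apply pow_le_pow_of_le_one (by norm_num) (by norm_num); omega
      _ = 1/2 := pow_one _
  have hkey : p * 2^(t+1) = 1 := by
    rw [hp, div_pow, one_pow, div_mul_eq_mul_div, one_mul, div_self (by positivity)]
  rw [sum_mu_event _ S T hd]
  have hSb : Real.exp (-2) ≤ (1 - p) ^ S.card := by
    have h1 : Real.exp (-(2*p)) ^ S.card ≤ (1-p) ^ S.card :=
      pow_le_pow_left₀ (Real.exp_nonneg _) (exp_le_one_sub hp0 hp1) _
    have h2 : Real.exp (-(2*p)) ^ S.card = Real.exp (-(2*p) * S.card) := by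
      rw [mul_comm (-(2*p)) (S.card : ℝ), Real.exp_nat_mul]
    have h3 : Real.exp (-2) ≤ Real.exp (-(2*p) * S.card) := by
      apply Real.exp_le_exp.mpr
      have hcast : (S.card : ℝ) ≤ 2^(t+1) := by
        calc (S.card : ℝ) ≤ ((2^(t+1) : ℕ) : ℝ) := by exact_mod_cast hS
          _ = 2^(t+1) := by push_cast; ring
      nlinarith [hp0.le, mul_le_mul_of_nonneg_left hcast hp0.le]
    calc Real.exp (-2) ≤ Real.exp (-(2*p) * S.card) := h3
      _ = Real.exp (-(2*p)) ^ S.card := h2.symm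
      _ ≤ (1-p)^S.card := h1
  have hTb : (1 - p) ^ T.card ≤ Real.exp (-2⁻¹) := by
    have h1 : (1-p)^T.card ≤ Real.exp (-p) ^ T.card :=
      pow_le_pow_left₀ (by linarith) one_sub_le_exp _
    have h2 : Real.exp (-p) ^ T.card = Real.exp (-p * T.card) := by
      rw [mul_comm (-p) (T.card : ℝ), Real.exp_nat_mul]
    have h3 : Real.exp (-p * T.card) ≤ Real.exp (-2⁻¹) := by
      apply Real.exp_le_exp.mpr
      have hcast : ((2^t : ℕ) : ℝ) ≤ (T.card : ℝ) := by exact_mod_cast hT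
      have h2t : ((2^t : ℕ) : ℝ) = 2^t := by push_cast; ring
      have hhalf : p * 2^t = 2⁻¹ := by
        have : (2:ℝ)^(t+1) = 2 * 2^t := by ring
        have h4 : p * (2 * 2^t) = 1 := by rw [← this]; exact hkey
        nlinarith
      nlinarith [mul_le_mul_of_nonneg_left (h2t ▸ hcast) hp0.le]
    calc (1-p)^T.card ≤ Real.exp (-p) ^ T.card := h1
      _ = Real.exp (-p * T.card) := h2
      _ ≤ Real.exp (-2⁻¹) := h3
  have he2 : (0:ℝ) < Real.exp (-2) := Real.exp_pos _
  have he12 : Real.exp (-2⁻¹) < 1 := by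
    rw [Real.exp_lt_one_iff]; norm_num
  apply mul_le_mul hSb (by linarith) (by linarith) (pow_nonneg (by linarith) _)

end event

section metric
variable {X : Type*} [MetricSpace X] [Fintype X]

/-- Distance to a finite set (0 if empty). -/
noncomputable def gA (A : Finset X) (z : X) : ℝ :=
  if h : A.Nonempty then A.inf' h (fun a => dist z a) else 0

lemma gA_le {A : Finset X} (h : A.Nonempty) {a : X} (ha : a ∈ A) (z : X) :
    gA A z ≤ dist z a := by
  rw [gA, dif_pos h]
  exact Finset.inf'_le _ ha

lemma le_gA {A : Finset X} (h : A.Nonempty) {z : X} {r : ℝ}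
    (hr : ∀ a ∈ A, r ≤ dist z a) : r ≤ gA A z := by
  rw [gA, dif_pos h]
  exact Finset.le_inf' _ _ hr

lemma gA_lipschitz (A : Finset X) (z w : X) : |gA A z - gA A w| ≤ dist z w := by
  by_cases h : A.Nonempty
  · rw [abs_sub_le_iff]
    constructor
    · obtain ⟨a, ha, hae⟩ := Finset.exists_mem_eq_inf' h (fun a => dist w a)
      have h1 : gA A z ≤ dist z a := gA_le h ha z
      have h2 : gA A w = dist w a := by rw [gA, dif_pos h, hae]
      have := dist_triangle z w a
      linarith
    · obtain ⟨a, ha, hae⟩ := Finset.exists_mem_eq_inf' h (fun a => dist z a)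
      have h1 : gA A w ≤ dist w a := gA_le h ha w
      have h2 : gA A z = dist z a := by rw [gA, dif_pos h, hae]
      have := dist_triangle w z a
      rw [dist_comm w z] at this
      linarith
  · simp [gA, dif_neg h, dist_nonneg]

/-- Number of points in the closed ball of radius `r` around `z`. -/
noncomputable def bCard (z : X) (r : ℝ) : ℕ := (univ.filter fun u => dist z u ≤ r).card

/-- Number of points in the open ball. -/
noncomputable def obCard (z : X) (r : ℝ) : ℕ := (univ.filter fun u => dist z u < r).card

/-- Candidate radii. -/
noncomputable def Fset (x y : X) (t : ℕ) : Finset ℝ :=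
  insert (dist x y / 4)
    (((univ.image (dist x)) ∪ (univ.image (dist y))).filter
      (fun r => 0 ≤ r ∧ r ≤ dist x y / 4 ∧ 2^t ≤ bCard x r ∧ 2^t ≤ bCard y r))

lemma Fset_nonempty (x y : X) (t : ℕ) : (Fset x y t).Nonempty :=
  ⟨_, Finset.mem_insert_self _ _⟩

noncomputable def rad (x y : X) (t : ℕ) : ℝ := (Fset x y t).min' (Fset_nonempty x y t)

lemma rad_nonneg (x y : X) (t : ℕ) : 0 ≤ rad x y t := by
  apply Finset.le_min'
  intro r hr
  rcases Finset.mem_insert.mp hr with h | h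
  · rw [h]; positivity
  · exact (Finset.mem_filter.mp h).2.1

lemma rad_le (x y : X) (t : ℕ) : rad x y t ≤ dist x y / 4 :=
  Finset.min'_le _ _ (Finset.mem_insert_self _ _)

lemma rad_mono (x y : X) (t : ℕ) : rad x y t ≤ rad x y (t+1) := by
  apply Finset.min'_le
  have hsub : Fset x y (t+1) ⊆ Fset x y t := by
    intro r hr
    rcases Finset.mem_insert.mp hr with h | h
    · rw [h]; exact Finset.mem_insert_self _ _
    · obtain ⟨hmem, h0, h4, hx, hy⟩ := Finset.mem_filter.mp h
      refine Finset.mem_insert_of_mem (Finset.mem_filter.mpr ⟨hmem, h0, h4, ?_, ?_⟩)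
      · exact le_trans (pow_le_pow_right₀ (by norm_num) (by omega)) hx
      · exact le_trans (pow_le_pow_right₀ (by norm_num) (by omega)) hy
  exact hsub (Finset.min'_mem _ _)

lemma rad_zero (x y : X) : rad x y 0 = 0 := by
  refine le_antisymm ?_ (rad_nonneg x y 0)
  apply Finset.min'_le
  apply Finset.mem_insert_of_mem
  rw [Finset.mem_filter]
  refine ⟨?_, le_refl 0, by positivity, ?_, ?_⟩
  · apply Finset.mem_union_left
    exact Finset.mem_image.mpr ⟨x, Finset.mem_univ x, dist_self x⟩
  · rw [pow_zero]
    have : x ∈ univ.filter fun u => dist x u ≤ 0 := by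
      simp [dist_self]
    exact Finset.card_pos.mpr ⟨x, this⟩
  · rw [pow_zero]
    have : y ∈ univ.filter fun u => dist y u ≤ 0 := by
      simp [dist_self]
    exact Finset.card_pos.mpr ⟨y, this⟩

lemma rad_top (x y : X) (t : ℕ) (ht : Fintype.card X < 2^t) : rad x y t = dist x y / 4 := by
  have hfil : (((univ.image (dist x)) ∪ (univ.image (dist y))).filter
      (fun r => 0 ≤ r ∧ r ≤ dist x y / 4 ∧ 2^t ≤ bCard x r ∧ 2^t ≤ bCard y r)) = ∅ := by
    apply Finset.filter_false_of_mem
    intro r _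
    rintro ⟨_, _, hx, _⟩
    have : bCard x r ≤ Fintype.card X := by
      unfold bCard
      exact le_trans (Finset.card_le_card (Finset.filter_subset _ _)) (le_of_eq rfl)
    omega
  refine le_antisymm (rad_le x y t) ?_
  apply Finset.le_min'
  intro r hr
  rcases Finset.mem_insert.mp hr with h | h
  · rw [h]
  · rw [hfil] at h; exact absurd h (Finset.notMem_empty r)

end metric

section scale
variable {X : Type*} [MetricSpace X] [Fintype X]

lemma scale_lower (x y : X) (t : ℕ) (h : rad x y t < rad x y (t+1)) :
    2^t ≤ bCard x (rad x y t) ∧ 2^t ≤ bCard y (rad x y t) := by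
  have hmem : rad x y t ∈ Fset x y t := Finset.min'_mem _ _
  rcases Finset.mem_insert.mp hmem with h1 | h1
  · exfalso
    have := rad_le x y (t+1)
    rw [h1] at h
    linarith
  · obtain ⟨_, _, _, hx, hy⟩ := Finset.mem_filter.mp h1
    exact ⟨hx, hy⟩

lemma scale_upper (x y : X) (t : ℕ) (h : rad x y t < rad x y (t+1)) :
    obCard x (rad x y (t+1)) < 2^(t+1) ∨ obCard y (rad x y (t+1)) < 2^(t+1) := by
  by_contra hcon
  push_neg at hcon
  obtain ⟨hx, hy⟩ := hcon
  set r1 := rad x y (t+1) with hr1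
  -- the open balls are nonempty
  have hpos : (0:ℕ) < 2^(t+1) := by positivity
  have hnex : (univ.filter fun u => dist x u < r1).Nonempty := by
    rw [← Finset.card_pos]; unfold obCard at hx; omega
  have hney : (univ.filter fun u => dist y u < r1).Nonempty := by
    rw [← Finset.card_pos]; unfold obCard at hy; omega
  have hSx : ((univ.filter fun u => dist x u < r1).image (dist x)).Nonempty :=
    hnex.image _
  have hSy : ((univ.filter fun u => dist y u < r1).image (dist y)).Nonempty :=
    hney.image _
  set ρx := ((univ.filter fun u => dist x u < r1).image (dist x)).max' hSx with hρx
  set ρy := ((univ.filter fun u => dist y u < r1).image (dist y)).max' hSy with hρy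
  set ρ := max ρx ρy with hρ
  have hρx_lt : ρx < r1 := by
    obtain ⟨u, hu⟩ := Finset.mem_image.mp (Finset.max'_mem _ hSx)
    obtain ⟨hu1, hu2⟩ := hu
    rw [hρx, ← hu2]
    exact (Finset.mem_filter.mp hu1).2
  have hρy_lt : ρy < r1 := by
    obtain ⟨u, hu⟩ := Finset.mem_image.mp (Finset.max'_mem _ hSy)
    obtain ⟨hu1, hu2⟩ := hu
    rw [hρy, ← hu2]
    exact (Finset.mem_filter.mp hu1).2
  have hρ_lt : ρ < r1 := max_lt hρx_lt hρy_lt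
  have hρ0 : 0 ≤ ρ := by
    obtain ⟨u, hu⟩ := Finset.mem_image.mp (Finset.max'_mem _ hSx)
    have : 0 ≤ ρx := by rw [hρx, ← hu.2]; exact dist_nonneg
    exact le_trans this (le_max_left _ _)
  have hcx : 2^(t+1) ≤ bCard x ρ := by
    refine le_trans hx (Finset.card_le_card ?_)
    intro u hu
    have hlt : dist x u < r1 := (Finset.mem_filter.mp hu).2
    refine Finset.mem_filter.mpr ⟨Finset.mem_univ u, ?_⟩
    have : dist x u ≤ ρx := Finset.le_max' _ _ (Finset.mem_image_of_mem _ hu)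
    exact le_trans this (le_max_left _ _)
  have hcy : 2^(t+1) ≤ bCard y ρ := by
    refine le_trans hy (Finset.card_le_card ?_)
    intro u hu
    refine Finset.mem_filter.mpr ⟨Finset.mem_univ u, ?_⟩
    have : dist y u ≤ ρy := Finset.le_max' _ _ (Finset.mem_image_of_mem _ hu)
    exact le_trans this (le_max_right _ _)
  have hρmem : ρ ∈ Fset x y (t+1) := by
    apply Finset.mem_insert_of_mem
    rw [Finset.mem_filter]
    refine ⟨?_, hρ0, le_trans hρ_lt.le (rad_le x y (t+1)), hcx, hcy⟩
    rcases max_choice ρx ρy with hc | hc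
    · rw [hρ, hc]
      apply Finset.mem_union_left
      obtain ⟨u, hu1, hu2⟩ := Finset.mem_image.mp (Finset.max'_mem _ hSx)
      exact Finset.mem_image.mpr ⟨u, Finset.mem_univ u, hu2⟩
    · rw [hρ, hc]
      apply Finset.mem_union_right
      obtain ⟨u, hu1, hu2⟩ := Finset.mem_image.mp (Finset.max'_mem _ hSy)
      exact Finset.mem_image.mpr ⟨u, Finset.mem_univ u, hu2⟩
  have : r1 ≤ ρ := Finset.min'_le _ _ hρmem
  linarith

end scale

noncomputable def c0 : ℝ := Real.exp (-2) * (1 - Real.exp (-2⁻¹))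

lemma c0_pos : 0 < c0 := by
  unfold c0
  have h1 : Real.exp (-2⁻¹) < 1 := by rw [Real.exp_lt_one_iff]; norm_num
  have := Real.exp_pos (-2:ℝ)
  nlinarith

section pair
variable {X : Type*} [MetricSpace X] [Fintype X]

lemma event_gap (z w : X) (r0 r1 : ℝ) (h0 : 0 ≤ r0) (hlt : r0 < r1)
    (hsep : r1 + r0 < dist z w) (t : ℕ)
    (hob : obCard z r1 < 2^(t+1)) (hb : 2^t ≤ bCard w r0) :
    c0 * (r1 - r0)^2
      ≤ ∑ A ∈ (univ : Finset X).powerset, mu ((1/2:ℝ)^(t+1)) A * (gA A z - gA A w)^2 := by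
  set p : ℝ := (1/2:ℝ)^(t+1) with hp
  have hp0 : (0:ℝ) ≤ p := by positivity
  have hp1 : p ≤ 1 := by
    rw [hp]; exact pow_le_one₀ (by norm_num) (by norm_num)
  set S := (univ : Finset X).filter (fun u => dist z u < r1) with hS
  set T := (univ : Finset X).filter (fun u => dist w u ≤ r0) with hT
  have hdisj : Disjoint S T := by
    rw [Finset.disjoint_left]
    intro u huS huT
    have h1 : dist z u < r1 := (Finset.mem_filter.mp huS).2
    have h2 : dist w u ≤ r0 := (Finset.mem_filter.mp huT).2
    have h3 := dist_triangle z u w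
    rw [dist_comm u w] at h3
    linarith
  have hScard : S.card ≤ 2^(t+1) := le_of_lt hob
  have hTcard : 2^t ≤ T.card := hb
  have hprob := event_prob_ge t S T hdisj hScard hTcard
  set E := (univ : Finset X).powerset.filter (fun A => A ∩ S = ∅ ∧ (A ∩ T).Nonempty) with hE
  have hgap : ∀ A ∈ E, (r1 - r0)^2 ≤ (gA A z - gA A w)^2 := by
    intro A hA
    obtain ⟨hA1, hA2, hA3⟩ := Finset.mem_filter.mp hA
    obtain ⟨a0, ha0⟩ := hA3
    have ha0A : a0 ∈ A := (Finset.mem_inter.mp ha0).1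
    have ha0T : a0 ∈ T := (Finset.mem_inter.mp ha0).2
    have hAne : A.Nonempty := ⟨a0, ha0A⟩
    have hz : r1 ≤ gA A z := by
      apply le_gA hAne
      intro a ha
      by_contra hc
      push_neg at hc
      have haS : a ∈ S := Finset.mem_filter.mpr ⟨Finset.mem_univ a, hc⟩
      have : a ∈ A ∩ S := Finset.mem_inter.mpr ⟨ha, haS⟩
      rw [hA2] at this
      exact Finset.notMem_empty a this
    have hw : gA A w ≤ r0 :=
      le_trans (gA_le hAne ha0A w) (Finset.mem_filter.mp ha0T).2
    have h1 : r1 - r0 ≤ gA A z - gA A w := by linarith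
    have h2 : 0 ≤ r1 - r0 := by linarith
    exact pow_le_pow_left₀ h2 h1 2
  calc c0 * (r1 - r0)^2 ≤ (∑ A ∈ E, mu p A) * (r1 - r0)^2 := by
        apply mul_le_mul_of_nonneg_right hprob (by positivity)
    _ = ∑ A ∈ E, mu p A * (r1 - r0)^2 := Finset.sum_mul _ _ _
    _ ≤ ∑ A ∈ E, mu p A * (gA A z - gA A w)^2 := by
        apply Finset.sum_le_sum
        intro A hA
        exact mul_le_mul_of_nonneg_left (hgap A hA) (mu_nonneg hp0 hp1 A)
    _ ≤ ∑ A ∈ (univ : Finset X).powerset, mu p A * (gA A z - gA A w)^2 := by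
        apply Finset.sum_le_sum_of_subset_of_nonneg (Finset.filter_subset _ _)
        intro A _ _
        exact mul_nonneg (mu_nonneg hp0 hp1 A) (by positivity)

lemma scale_bound (x y : X) (hxy : x ≠ y) (t : ℕ) :
    c0 * (rad x y (t+1) - rad x y t)^2
      ≤ ∑ A ∈ (univ : Finset X).powerset, mu ((1/2:ℝ)^(t+1)) A * (gA A x - gA A y)^2 := by
  have hp0 : (0:ℝ) ≤ (1/2:ℝ)^(t+1) := by positivity
  have hp1 : ((1/2:ℝ))^(t+1) ≤ 1 := pow_le_one₀ (by norm_num) (by norm_num)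
  have hd : 0 < dist x y := dist_pos.mpr hxy
  rcases lt_or_ge (rad x y t) (rad x y (t+1)) with hlt | hge
  · have hlow := scale_lower x y t hlt
    have hsep : rad x y (t+1) + rad x y t < dist x y := by
      have h1 := rad_le x y t
      have h2 := rad_le x y (t+1)
      linarith
    rcases scale_upper x y t hlt with hz | hz
    · exact event_gap x y _ _ (rad_nonneg x y t) hlt hsep t hz hlow.2
    · have h := event_gap y x _ _ (rad_nonneg x y t) hlt
        (by rw [dist_comm]; exact hsep) t hz hlow.1
      calc c0 * (rad x y (t+1) - rad x y t)^2
          ≤ ∑ A ∈ (univ : Finset X).powerset,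
              mu ((1/2:ℝ)^(t+1)) A * (gA A y - gA A x)^2 := h
        _ = ∑ A ∈ (univ : Finset X).powerset,
              mu ((1/2:ℝ)^(t+1)) A * (gA A x - gA A y)^2 := by
            apply Finset.sum_congr rfl
            intro A _
            ring
  · have heq : rad x y (t+1) = rad x y t := le_antisymm hge (rad_mono x y t)
    rw [heq, sub_self]
    rw [show c0 * (0:ℝ)^2 = 0 by ring]
    apply Finset.sum_nonneg
    intro A _
    exact mul_nonneg (mu_nonneg hp0 hp1 A) (by positivity)

lemma pair_bound_s6 (hX : 2 ≤ Fintype.card X) (x y : X) :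
    (c0/16) * dist x y^2 / (Nat.log 2 (Fintype.card X) + 1 : ℝ)^2
      ≤ ∑ t ∈ Finset.range (Nat.log 2 (Fintype.card X) + 1),
          ∑ A ∈ (univ : Finset X).powerset,
            (1/(Nat.log 2 (Fintype.card X) + 1 : ℝ)) * mu ((1/2:ℝ)^(t+1)) A
              * (gA A x - gA A y)^2 := by
  rw [show ((Nat.log 2 (Fintype.card X) : ℝ) + 1) = ((Nat.log 2 (Fintype.card X) + 1 : ℕ) : ℝ)
    by push_cast; ring]
  set m : ℕ := Nat.log 2 (Fintype.card X) + 1 with hm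
  have hm0 : (0:ℝ) < m := by positivity
  have hterm_nonneg : ∀ t ∈ Finset.range m, ∀ A ∈ (univ : Finset X).powerset,
      (0:ℝ) ≤ (1/(m:ℝ)) * mu ((1/2:ℝ)^(t+1)) A * (gA A x - gA A y)^2 := by
    intro t _ A _
    have hp0 : (0:ℝ) ≤ (1/2:ℝ)^(t+1) := by positivity
    have hp1 : ((1/2:ℝ))^(t+1) ≤ 1 := pow_le_one₀ (by norm_num) (by norm_num)
    have := mu_nonneg hp0 hp1 A (α := X)
    positivity
  have hmne : (m:ℝ) ≠ 0 := ne_of_gt hm0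
  by_cases hxy : x = y
  · refine le_trans (le_of_eq ?_)
      (Finset.sum_nonneg fun t ht => Finset.sum_nonneg fun A hA => hterm_nonneg t ht A hA)
    rw [hxy, dist_self]
    ring
  · -- telescoping
    have htop : rad x y m = dist x y / 4 := by
      apply rad_top
      rw [hm]
      exact Nat.lt_pow_succ_log_self (by norm_num) _
    have htel : ∑ t ∈ Finset.range m, (rad x y (t+1) - rad x y t) = dist x y / 4 := by
      rw [Finset.sum_range_sub (fun t => rad x y t), htop, rad_zero, sub_zero]
    have hcs : (dist x y / 4)^2 / (m:ℝ)
        ≤ ∑ t ∈ Finset.range m, (rad x y (t+1) - rad x y t)^2 := by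
      have := sq_sum_le_card_mul_sum_sq
        (s := Finset.range m) (f := fun t => rad x y (t+1) - rad x y t)
      rw [htel, Finset.card_range] at this
      rw [div_le_iff₀ hm0]
      calc (dist x y / 4)^2 ≤ (m:ℝ) * ∑ t ∈ Finset.range m, (rad x y (t+1) - rad x y t)^2 :=
            this
        _ = (∑ t ∈ Finset.range m, (rad x y (t+1) - rad x y t)^2) * m := by ring
    calc (c0/16) * dist x y^2 / (m:ℝ)^2
        = (1/(m:ℝ)) * (c0 * ((dist x y/4)^2 / (m:ℝ))) := by
          field_simp
          ring
      _ ≤ (1/(m:ℝ)) * (c0 * ∑ t ∈ Finset.range m, (rad x y (t+1) - rad x y t)^2) := by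
          apply mul_le_mul_of_nonneg_left _ (by positivity)
          exact mul_le_mul_of_nonneg_left hcs c0_pos.le
      _ = ∑ t ∈ Finset.range m, (1/(m:ℝ)) * (c0 * (rad x y (t+1) - rad x y t)^2) := by
          rw [Finset.mul_sum, Finset.mul_sum]
      _ ≤ ∑ t ∈ Finset.range m, (1/(m:ℝ)) *
            ∑ A ∈ (univ : Finset X).powerset, mu ((1/2:ℝ)^(t+1)) A * (gA A x - gA A y)^2 := by
          apply Finset.sum_le_sum
          intro t _
          exact mul_le_mul_of_nonneg_left (scale_bound x y hxy t) (by positivity)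
      _ = ∑ t ∈ Finset.range m, ∑ A ∈ (univ : Finset X).powerset,
            (1/(m:ℝ)) * mu ((1/2:ℝ)^(t+1)) A * (gA A x - gA A y)^2 := by
          apply Finset.sum_congr rfl
          intro t _
          rw [Finset.mul_sum]
          apply Finset.sum_congr rfl
          intro A _
          ring

lemma weight_sum (m : ℕ) (hm : 0 < m) :
    ∑ t ∈ Finset.range m, ∑ A ∈ (univ : Finset X).powerset,
      (1/(m:ℝ)) * mu ((1/2:ℝ)^(t+1)) A = 1 := by
  have : ∀ t ∈ Finset.range m, ∑ A ∈ (univ : Finset X).powerset,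
      (1/(m:ℝ)) * mu ((1/2:ℝ)^(t+1)) A = 1/(m:ℝ) := by
    intro t _
    rw [← Finset.mul_sum, sum_mu, mul_one]
  rw [Finset.sum_congr rfl this, Finset.sum_const, Finset.card_range, nsmul_eq_mul]
  field_simp

end pair

section swap

lemma swap_sums {ι₁ ι₂ ι₃ ι₄ : Type*} (s1 : Finset ι₁) (s2 : Finset ι₂) (s3 : Finset ι₃)
    (s4 : Finset ι₄) (g : ι₁ → ι₂ → ι₃ → ι₄ → ℝ) :
    ∑ a ∈ s1, ∑ b ∈ s2, ∑ c ∈ s3, ∑ d ∈ s4, g a b c d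
      = ∑ c ∈ s3, ∑ d ∈ s4, ∑ a ∈ s1, ∑ b ∈ s2, g a b c d := by
  calc ∑ a ∈ s1, ∑ b ∈ s2, ∑ c ∈ s3, ∑ d ∈ s4, g a b c d
      = ∑ p ∈ s1 ×ˢ s2, ∑ c ∈ s3, ∑ d ∈ s4, g p.1 p.2 c d := by
        rw [Finset.sum_product' (f := fun a b => ∑ c ∈ s3, ∑ d ∈ s4, g a b c d)]
    _ = ∑ p ∈ s1 ×ˢ s2, ∑ q ∈ s3 ×ˢ s4, g p.1 p.2 q.1 q.2 := by
        apply Finset.sum_congr rfl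
        intro p _
        rw [Finset.sum_product' (f := fun c d => g p.1 p.2 c d)]
    _ = ∑ q ∈ s3 ×ˢ s4, ∑ p ∈ s1 ×ˢ s2, g p.1 p.2 q.1 q.2 := Finset.sum_comm
    _ = ∑ q ∈ s3 ×ˢ s4, ∑ a ∈ s1, ∑ b ∈ s2, g a b q.1 q.2 := by
        apply Finset.sum_congr rfl
        intro q _
        rw [Finset.sum_product' (f := fun a b => g a b q.1 q.2)]
    _ = ∑ c ∈ s3, ∑ d ∈ s4, ∑ a ∈ s1, ∑ b ∈ s2, g a b c d := by
        rw [Finset.sum_product'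
          (f := fun c d => ∑ a ∈ s1, ∑ b ∈ s2, g a b c d)]

end swap

section graph
variable {V : Type*} [Fintype V] (G : SimpleGraph V)

lemma gdeg_pos_s6 (hG : G.Connected) (hV : 2 ≤ Fintype.card V) (v : V) : 1 ≤ gdeg G v := by
  obtain ⟨u, hu⟩ := Fintype.exists_ne_of_one_lt_card (by omega) v
  obtain ⟨p⟩ := hG.preconnected v u
  obtain ⟨w, hw⟩ : ∃ w, G.Adj v w := by
    cases p with
    | nil => exact absurd rfl hu
    | cons h q => exact ⟨_, h⟩
  unfold gdeg
  have hne : (G.neighborSet v).Nonempty := ⟨w, hw⟩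
  exact (Set.ncard_pos (Set.toFinite _)).mpr hne

end graph

section rayleigh
variable {V : Type*} [Fintype V] (G : SimpleGraph V)

lemma Rf_metric_nonneg {Y : Type*} [MetricSpace Y] (f : V → Y) :
    0 ≤ Rf G (fun a b : Y => dist a b) f := by
  unfold Rf
  apply div_nonneg
  · apply mul_nonneg (Nat.cast_nonneg _)
    apply div_nonneg _ (by norm_num)
    apply Finset.sum_nonneg
    intro u _
    apply Finset.sum_nonneg
    intro v _
    split <;> positivity
  · apply div_nonneg _ (by norm_num)
    apply Finset.sum_nonneg
    intro u _
    apply Finset.sum_nonneg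
    intro v _
    split <;> positivity

lemma lam_metric_nonneg {Y : Type*} [MetricSpace Y] :
    0 ≤ lam G (fun a b : Y => dist a b) := by
  apply Real.sInf_nonneg
  rintro r ⟨f, _, rfl⟩
  exact Rf_metric_nonneg G f

lemma lam_bddBelow {Y : Type*} [MetricSpace Y] :
    BddBelow {r | ∃ f : V → Y, (∃ u v, f u ≠ f v) ∧ r = Rf G (fun a b : Y => dist a b) f} := by
  refine ⟨0, ?_⟩
  rintro r ⟨f, _, rfl⟩
  exact Rf_metric_nonneg G f

lemma lam_mul_le (h : V → ℝ) :
    lam G (fun a b : ℝ => dist a b)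
        * (∑ u, ∑ v, if u ≠ v then dist (h u) (h v) ^ 2 * (gdeg G u : ℝ) * (gdeg G v : ℝ) else 0)
      ≤ (gvol G : ℝ) * (∑ u, ∑ v, if G.Adj u v then dist (h u) (h v) ^ 2 else 0) := by
  set D := ∑ u, ∑ v, if u ≠ v then dist (h u) (h v) ^ 2 * (gdeg G u : ℝ) * (gdeg G v : ℝ) else 0
    with hD
  set E := ∑ u, ∑ v, if G.Adj u v then dist (h u) (h v) ^ 2 else 0 with hE
  have hD0 : 0 ≤ D := by
    apply Finset.sum_nonneg; intro u _; apply Finset.sum_nonneg; intro v _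
    split <;> positivity
  have hE0 : 0 ≤ E := by
    apply Finset.sum_nonneg; intro u _; apply Finset.sum_nonneg; intro v _
    split <;> positivity
  rcases eq_or_lt_of_le hD0 with heq | hlt
  · rw [← heq, mul_zero]
    positivity
  · have hnc : ∃ u v, h u ≠ h v := by
      by_contra hc
      push_neg at hc
      have : D = 0 := by
        rw [hD]
        apply Finset.sum_eq_zero; intro u _
        apply Finset.sum_eq_zero; intro v _
        rw [hc u v, dist_self]
        split <;> ring
      linarith
    have hmem : Rf G (fun a b : ℝ => dist a b) h ∈
        {r | ∃ f : V → ℝ, (∃ u v, f u ≠ f v) ∧ r = Rf G (fun a b : ℝ => dist a b) f} :=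
      ⟨h, hnc, rfl⟩
    have hle : lam G (fun a b : ℝ => dist a b) ≤ Rf G (fun a b : ℝ => dist a b) h :=
      csInf_le (lam_bddBelow G) hmem
    have hRf : Rf G (fun a b : ℝ => dist a b) h = ((gvol G : ℝ) * (E / 2)) / (D / 2) := rfl
    rw [hRf] at hle
    have h2 : (0:ℝ) < D / 2 := by linarith
    have := (le_div_iff₀ h2).mp hle
    have hvolE : (gvol G : ℝ) * (E/2) = ((gvol G : ℝ) * E)/2 := by ring
    linarith

end rayleigh

section core
variable {V : Type*} [Fintype V]

noncomputable def Esum {Y : Type*} (G : SimpleGraph V) (d : Y → Y → ℝ) (f : V → Y) : ℝ :=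
  ∑ u, ∑ v, if G.Adj u v then d (f u) (f v) ^ 2 else 0

noncomputable def Dsum {Y : Type*} (G : SimpleGraph V) (d : Y → Y → ℝ) (f : V → Y) : ℝ :=
  ∑ u, ∑ v, if u ≠ v then d (f u) (f v) ^ 2 * (gdeg G u : ℝ) * (gdeg G v : ℝ) else 0

lemma Rf_eq {Y : Type*} (G : SimpleGraph V) (d : Y → Y → ℝ) (f : V → Y) :
    Rf G d f = ((gvol G : ℝ) * (Esum G d f / 2)) / (Dsum G d f / 2) := rfl

lemma lam_mul_le' (G : SimpleGraph V) (h : V → ℝ) :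
    lam G (fun a b : ℝ => dist a b) * Dsum G (fun a b : ℝ => dist a b) h
      ≤ (gvol G : ℝ) * Esum G (fun a b : ℝ => dist a b) h :=
  lam_mul_le G h

noncomputable def qw (G : SimpleGraph V) (u v : V) : ℝ :=
  if u ≠ v then (gdeg G u : ℝ) * (gdeg G v : ℝ) else 0

lemma qw_nonneg (G : SimpleGraph V) (u v : V) : 0 ≤ qw G u v := by
  unfold qw; split <;> positivity

lemma Dsum_eq {Y : Type*} (G : SimpleGraph V) (d : Y → Y → ℝ) (g : V → Y) :
    Dsum G d g = ∑ u, ∑ v, qw G u v * d (g u) (g v) ^ 2 := by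
  unfold Dsum qw
  apply Finset.sum_congr rfl; intro u _
  apply Finset.sum_congr rfl; intro v _
  split <;> ring

lemma Esum_nonneg {Y : Type*} [MetricSpace Y] (G : SimpleGraph V) (f : V → Y) :
    0 ≤ Esum G (fun a b : Y => dist a b) f := by
  apply Finset.sum_nonneg; intro u _; apply Finset.sum_nonneg; intro v _
  split <;> positivity

lemma Dsum_nonneg {Y : Type*} [MetricSpace Y] (G : SimpleGraph V) (f : V → Y) :
    0 ≤ Dsum G (fun a b : Y => dist a b) f := by
  apply Finset.sum_nonneg; intro u _; apply Finset.sum_nonneg; intro v _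
  split <;> positivity

lemma core (G : SimpleGraph V) {X : Type*} [MetricSpace X] [Fintype X]
    (hX : 2 ≤ Fintype.card X) (f : V → X) :
    lam G (fun a b : ℝ => dist a b) *
      ((c0/16) / (Nat.log 2 (Fintype.card X) + 1 : ℝ)^2 * Dsum G (fun a b : X => dist a b) f)
    ≤ (gvol G : ℝ) * Esum G (fun a b : X => dist a b) f := by
  set M : ℝ := (Nat.log 2 (Fintype.card X) : ℝ) + 1 with hM
  set m : ℕ := Nat.log 2 (Fintype.card X) + 1 with hm
  have hMm : M = (m : ℝ) := by rw [hM, hm]; push_cast; ring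
  have hM0 : (0:ℝ) < M := by rw [hM]; positivity
  set P := (univ : Finset X).powerset with hP
  set lamR := lam G (fun a b : ℝ => dist a b) with hlamR
  have hlam0 : 0 ≤ lamR := lam_metric_nonneg G
  set W : ℕ → Finset X → ℝ := fun t A => (1/M) * mu ((1/2:ℝ)^(t+1)) A with hW
  have hW0 : ∀ t (A : Finset X), 0 ≤ W t A := by
    intro t A
    have hp0 : (0:ℝ) ≤ (1/2:ℝ)^(t+1) := by positivity
    have hp1 : ((1/2:ℝ))^(t+1) ≤ 1 := pow_le_one₀ (by norm_num) (by norm_num)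
    have := mu_nonneg hp0 hp1 A (α := X)
    rw [hW]
    positivity
  have hWsum : ∑ t ∈ Finset.range m, ∑ A ∈ P, W t A = 1 := by
    have := weight_sum (X := X) m (by rw [hm]; omega)
    rw [hW, hP, hMm]
    exact this
  -- per (t, A) real-valued map
  have key1 : ∀ (A : Finset X),
      Esum G (fun a b : ℝ => dist a b) (fun v => gA A (f v))
        ≤ Esum G (fun a b : X => dist a b) f := by
    intro A
    unfold Esum
    apply Finset.sum_le_sum; intro u _
    apply Finset.sum_le_sum; intro v _
    split
    · have hlip := gA_lipschitz A (f u) (f v)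
      dsimp only
      rw [Real.dist_eq, sq_abs, ← sq_abs (gA A (f u) - gA A (f v))]
      exact pow_le_pow_left₀ (abs_nonneg _) hlip 2
    · exact le_refl _
  -- key2 : spectral gap applied to each coordinate
  have key2 : ∀ (t : ℕ) (A : Finset X),
      lamR * Dsum G (fun a b : ℝ => dist a b) (fun v => gA A (f v))
        ≤ (gvol G : ℝ) * Esum G (fun a b : ℝ => dist a b) (fun v => gA A (f v)) := by
    intro t A
    exact lam_mul_le' G _
  -- key3 : Bourgain-type lower bound on the weighted denominators
  have key3 : (c0/16) / M^2 * Dsum G (fun a b : X => dist a b) f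
      ≤ ∑ t ∈ Finset.range m, ∑ A ∈ P,
          W t A * Dsum G (fun a b : ℝ => dist a b) (fun v => gA A (f v)) := by
    have step1 : ∀ (t : ℕ) (A : Finset X),
        W t A * Dsum G (fun a b : ℝ => dist a b) (fun v => gA A (f v))
          = ∑ u, ∑ v, W t A * (qw G u v * (gA A (f u) - gA A (f v))^2) := by
      intro t A
      rw [Dsum_eq, Finset.mul_sum]
      apply Finset.sum_congr rfl; intro u _
      rw [Finset.mul_sum]
      apply Finset.sum_congr rfl; intro v _
      rw [Real.dist_eq, sq_abs]
    calc (c0/16) / M^2 * Dsum G (fun a b : X => dist a b) f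
        = ∑ u, ∑ v, qw G u v * ((c0/16) * dist (f u) (f v)^2 / M^2) := by
          rw [Dsum_eq, Finset.mul_sum]
          apply Finset.sum_congr rfl; intro u _
          rw [Finset.mul_sum]
          apply Finset.sum_congr rfl; intro v _
          ring
      _ ≤ ∑ u, ∑ v, qw G u v * (∑ t ∈ Finset.range m, ∑ A ∈ P,
            W t A * (gA A (f u) - gA A (f v))^2) := by
          apply Finset.sum_le_sum; intro u _
          apply Finset.sum_le_sum; intro v _
          apply mul_le_mul_of_nonneg_left _ (qw_nonneg G u v)
          have hpb := pair_bound_s6 hX (f u) (f v)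
          rw [← hM] at hpb
          calc (c0/16) * dist (f u) (f v)^2 / M^2
              ≤ ∑ t ∈ Finset.range m, ∑ A ∈ (univ : Finset X).powerset,
                  (1/M) * mu ((1/2:ℝ)^(t+1)) A * (gA A (f u) - gA A (f v))^2 := hpb
            _ = ∑ t ∈ Finset.range m, ∑ A ∈ P,
                  W t A * (gA A (f u) - gA A (f v))^2 := by
                apply Finset.sum_congr rfl; intro t _
                apply Finset.sum_congr rfl; intro A _
                rw [hW]
      _ = ∑ u, ∑ v, ∑ t ∈ Finset.range m, ∑ A ∈ P,
            W t A * (qw G u v * (gA A (f u) - gA A (f v))^2) := by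
          apply Finset.sum_congr rfl; intro u _
          apply Finset.sum_congr rfl; intro v _
          rw [Finset.mul_sum]
          apply Finset.sum_congr rfl; intro t _
          rw [Finset.mul_sum]
          apply Finset.sum_congr rfl; intro A _
          ring
      _ = ∑ t ∈ Finset.range m, ∑ A ∈ P, ∑ u, ∑ v,
            W t A * (qw G u v * (gA A (f u) - gA A (f v))^2) := by
          rw [swap_sums]
      _ = ∑ t ∈ Finset.range m, ∑ A ∈ P,
            W t A * Dsum G (fun a b : ℝ => dist a b) (fun v => gA A (f v)) := by
          apply Finset.sum_congr rfl; intro t _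
          apply Finset.sum_congr rfl; intro A _
          rw [step1 t A]
  -- assemble
  have hEX0 : 0 ≤ Esum G (fun a b : X => dist a b) f := Esum_nonneg G f
  have hvol0 : (0:ℝ) ≤ (gvol G : ℝ) := Nat.cast_nonneg _
  calc lamR * ((c0/16) / M^2 * Dsum G (fun a b : X => dist a b) f)
      ≤ lamR * ∑ t ∈ Finset.range m, ∑ A ∈ P,
          W t A * Dsum G (fun a b : ℝ => dist a b) (fun v => gA A (f v)) :=
        mul_le_mul_of_nonneg_left key3 hlam0
    _ = ∑ t ∈ Finset.range m, ∑ A ∈ P,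
          W t A * (lamR * Dsum G (fun a b : ℝ => dist a b) (fun v => gA A (f v))) := by
        rw [Finset.mul_sum]
        apply Finset.sum_congr rfl; intro t _
        rw [Finset.mul_sum]
        apply Finset.sum_congr rfl; intro A _
        ring
    _ ≤ ∑ t ∈ Finset.range m, ∑ A ∈ P,
          W t A * ((gvol G : ℝ) * Esum G (fun a b : ℝ => dist a b) (fun v => gA A (f v))) := by
        apply Finset.sum_le_sum; intro t _
        apply Finset.sum_le_sum; intro A _
        exact mul_le_mul_of_nonneg_left (key2 t A) (hW0 t A)
    _ ≤ ∑ t ∈ Finset.range m, ∑ A ∈ P,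
          W t A * ((gvol G : ℝ) * Esum G (fun a b : X => dist a b) f) := by
        apply Finset.sum_le_sum; intro t _
        apply Finset.sum_le_sum; intro A _
        exact mul_le_mul_of_nonneg_left
          (mul_le_mul_of_nonneg_left (key1 A) hvol0) (hW0 t A)
    _ = (∑ t ∈ Finset.range m, ∑ A ∈ P, W t A)
          * ((gvol G : ℝ) * Esum G (fun a b : X => dist a b) f) := by
        rw [Finset.sum_mul]
        apply Finset.sum_congr rfl; intro t _
        rw [Finset.sum_mul]
    _ = (gvol G : ℝ) * Esum G (fun a b : X => dist a b) f := by
        rw [hWsum, one_mul]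

end core

/-- There is an absolute constant `C > 0` such that for every finite metric
space `X` with at least two points and every connected finite simple graph `G` with at
least two vertices, `(C / (log |X|)²) · λ(G, ℝ) ≤ λ(G, X)`. -/
theorem stmt_6 : ∃ C : ℝ, 0 < C ∧
    ∀ (X : Type*) [MetricSpace X] [Fintype X], 2 ≤ Fintype.card X →
      ∀ (V : Type*) [Fintype V] (G : SimpleGraph V), G.Connected → 2 ≤ Fintype.card V →
        C / (Real.log (Fintype.card X)) ^ 2 * lam G (fun x y : ℝ => dist x y)
          ≤ lam G (fun x y : X => dist x y) := by
  have hlog2 : 0 < Real.log 2 := Real.log_pos (by norm_num)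
  refine ⟨c0/16 * (Real.log 2)^2 / 4, by have := c0_pos; positivity, ?_⟩
  intro X _ _ hX V _ G hG hV
  set C : ℝ := c0/16 * (Real.log 2)^2 / 4 with hC
  set n := Fintype.card X with hn
  set M : ℝ := (Nat.log 2 n : ℝ) + 1 with hM
  have hM0 : (0:ℝ) < M := by rw [hM]; positivity
  have hlogn : 0 < Real.log n := by
    apply Real.log_pos
    exact_mod_cast (by omega : 1 < n)
  have hklog : (Nat.log 2 n : ℝ) * Real.log 2 ≤ Real.log n := by
    have h1 : (2:ℕ) ^ (Nat.log 2 n) ≤ n := Nat.pow_log_le_self 2 (by omega)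
    have h2 : ((2:ℝ)) ^ (Nat.log 2 n) ≤ (n:ℝ) := by exact_mod_cast h1
    have h3 := Real.log_le_log (by positivity) h2
    rwa [Real.log_pow] at h3
  have hk1 : 1 ≤ Nat.log 2 n := Nat.log_pos (by norm_num) hX
  have hMlog : M * Real.log 2 ≤ 2 * Real.log n := by
    have hk1' : (1:ℝ) ≤ (Nat.log 2 n : ℝ) := by exact_mod_cast hk1
    have : M ≤ 2 * (Nat.log 2 n : ℝ) := by rw [hM]; linarith
    calc M * Real.log 2 ≤ 2 * (Nat.log 2 n : ℝ) * Real.log 2 :=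
          mul_le_mul_of_nonneg_right this hlog2.le
      _ = 2 * ((Nat.log 2 n : ℝ) * Real.log 2) := by ring
      _ ≤ 2 * Real.log n := by linarith
  have hCM : C / (Real.log n)^2 ≤ (c0/16) / M^2 := by
    rw [div_le_div_iff₀ (by positivity) (by positivity)]
    have hsq : (M * Real.log 2)^2 ≤ (2 * Real.log n)^2 := by
      apply pow_le_pow_left₀ (by positivity) hMlog
    have hc0 := c0_pos
    have hmul := mul_le_mul_of_nonneg_left hsq (show (0:ℝ) ≤ c0/64 by positivity)
    rw [hC]
    nlinarith [hmul]
  apply le_csInf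
  · have hVnt : Nontrivial V := Fintype.one_lt_card_iff_nontrivial.mp (by omega)
    have hXnt : Nontrivial X := Fintype.one_lt_card_iff_nontrivial.mp (by omega)
    obtain ⟨v0, v1, hv⟩ := exists_pair_ne V
    obtain ⟨x0, x1, hx⟩ := exists_pair_ne X
    refine ⟨_, fun v => if v = v0 then x0 else x1, ⟨v0, v1, ?_⟩, rfl⟩
    simp only [if_pos rfl, if_neg hv.symm]
    exact hx
  · rintro r ⟨f, ⟨u0, v0, hf⟩, rfl⟩
    have hlam0 : 0 ≤ lam G (fun a b : ℝ => dist a b) := lam_metric_nonneg G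
    have hcore := core G hX f
    rw [← hM] at hcore
    set DX := Dsum G (fun a b : X => dist a b) f with hDX
    set EX := Esum G (fun a b : X => dist a b) f with hEX
    have hu0v0 : u0 ≠ v0 := fun h => hf (by rw [h])
    have hDXpos : 0 < DX := by
      rw [hDX]
      unfold Dsum
      have hterm : ∀ u v : V, (0:ℝ) ≤
          if u ≠ v then dist (f u) (f v)^2 * (gdeg G u : ℝ) * (gdeg G v : ℝ) else 0 := by
        intro u v; split <;> positivity
      apply Finset.sum_pos' (fun u _ => Finset.sum_nonneg fun v _ => hterm u v)
      refine ⟨u0, Finset.mem_univ _, ?_⟩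
      apply Finset.sum_pos' (fun v _ => hterm u0 v)
      refine ⟨v0, Finset.mem_univ _, ?_⟩
      rw [if_pos hu0v0]
      have hd : 0 < dist (f u0) (f v0) := dist_pos.mpr hf
      have hg1 : 1 ≤ gdeg G u0 := gdeg_pos_s6 G hG hV u0
      have hg2 : 1 ≤ gdeg G v0 := gdeg_pos_s6 G hG hV v0
      have hg1' : (1:ℝ) ≤ (gdeg G u0 : ℝ) := by exact_mod_cast hg1
      have hg2' : (1:ℝ) ≤ (gdeg G v0 : ℝ) := by exact_mod_cast hg2
      have hdd : 0 < dist (f u0) (f v0)^2 := by positivity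
      exact mul_pos (mul_pos hdd (by linarith)) (by linarith)
    have hRfeq : Rf G (fun x y : X => dist x y) f = ((gvol G : ℝ) * (EX/2)) / (DX/2) := rfl
    rw [hRfeq, le_div_iff₀ (by linarith)]
    have hstep : (C / (Real.log n)^2 * lam G (fun a b : ℝ => dist a b)) * DX
        ≤ lam G (fun a b : ℝ => dist a b) * ((c0/16) / M^2 * DX) := by
      have h1 : C / (Real.log n)^2 * (lam G (fun a b : ℝ => dist a b) * DX)
          ≤ (c0/16) / M^2 * (lam G (fun a b : ℝ => dist a b) * DX) :=
        mul_le_mul_of_nonneg_right hCM (mul_nonneg hlam0 hDXpos.le)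
      nlinarith [h1]
    have h2 : C / (Real.log n)^2 * lam G (fun a b : ℝ => dist a b) * (DX/2)
        = ((C / (Real.log n)^2 * lam G (fun a b : ℝ => dist a b)) * DX)/2 := by ring
    have h3 : (gvol G : ℝ) * (EX/2) = ((gvol G : ℝ) * EX)/2 := by ring
    rw [h2, h3]
    linarith [hstep, hcore]
end

section
/- Let G be a connected finite simple graph on n ≥ 2 vertices and let H be a connected finite simple graph on k ≥ 2 vertices with diameter D_H. Then λ(G, H) ≥ 2k / (D_H² · vol(G) · (k−1)). -/
open scoped Classical
open Finset

/-- On any walk whose endpoints have different `f`-values, some edge has endpoints with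
different `f`-values. -/
lemma aux_exists_adj_ne {V X : Type*} {G : SimpleGraph V} (f : V → X) :
    ∀ {a b : V}, G.Walk a b → f a ≠ f b → ∃ x y, G.Adj x y ∧ f x ≠ f y := by
  intro a b p
  induction p with
  | nil => exact fun h => absurd rfl h
  | @cons u v w h q ih =>
    intro hab
    by_cases hf : f u = f v
    · exact ih (hf ▸ hab)
    · exact ⟨u, v, h, hf⟩

/-- The Cauchy–Schwarz step: the degree-weighted count of ordered pairs separated by `f`
is at most `(∑ dg)² · (k - 1)/k`. -/
lemma key_T_bound {V W : Type*} [Fintype V] [Fintype W] (f : V → W) (dg : V → ℝ) :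
    (Fintype.card W : ℝ) * (∑ u, ∑ v, if f u ≠ f v then dg u * dg v else 0)
      ≤ (∑ u, dg u) ^ 2 * ((Fintype.card W : ℝ) - 1) := by
  classical
  set M : W → ℝ := fun w => ∑ u ∈ Finset.univ.filter (fun u => f u = w), dg u with hMdef
  have hMsum : ∑ w, M w = ∑ u, dg u := Finset.sum_fiberwise _ f dg
  have hinner : ∀ u, (∑ v, if f u = f v then dg u * dg v else 0) = dg u * M (f u) := by
    intro u
    simp only [hMdef]
    rw [Finset.mul_sum, Finset.sum_filter]
    apply Finset.sum_congr rfl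
    intro v _
    by_cases h : f u = f v
    · rw [if_pos h, if_pos h.symm]
    · rw [if_neg h, if_neg (fun h' => h h'.symm)]
  have hEeq : (∑ u, ∑ v, if f u = f v then dg u * dg v else 0) = ∑ w, M w ^ 2 := by
    rw [Finset.sum_congr rfl (fun u _ => hinner u),
      ← Finset.sum_fiberwise Finset.univ f (fun u => dg u * M (f u))]
    apply Finset.sum_congr rfl
    intro w _
    calc ∑ u ∈ Finset.univ.filter (fun u => f u = w), dg u * M (f u)
        = ∑ u ∈ Finset.univ.filter (fun u => f u = w), dg u * M w := by
          apply Finset.sum_congr rfl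
          intro u hu
          rw [(Finset.mem_filter.mp hu).2]
      _ = M w ^ 2 := by rw [← Finset.sum_mul]; rw [hMdef]; ring
  have hTeq : (∑ u, ∑ v, if f u ≠ f v then dg u * dg v else 0)
      = (∑ u, dg u) ^ 2 - ∑ w, M w ^ 2 := by
    rw [← hEeq]
    have hsq : (∑ u, dg u) ^ 2 = ∑ u, ∑ v, dg u * dg v := by
      rw [sq, Finset.sum_mul_sum]
    rw [hsq, ← Finset.sum_sub_distrib]
    apply Finset.sum_congr rfl
    intro u _
    rw [← Finset.sum_sub_distrib]
    apply Finset.sum_congr rfl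
    intro v _
    by_cases h : f u = f v <;> simp [h]
  have hCS : (∑ u, dg u) ^ 2 ≤ (Fintype.card W : ℝ) * ∑ w, M w ^ 2 := by
    rw [← hMsum]
    simpa using sq_sum_le_card_mul_sum_sq (s := Finset.univ) (f := M)
  rw [hTeq]
  nlinarith [hCS]

set_option maxHeartbeats 1600000 in
/-- For a connected finite simple graph `G` on `n ≥ 2` vertices and a connected
finite simple graph `H` on `k ≥ 2` vertices with diameter `D_H`,
`λ(G, H) ≥ 2k / (D_H² · vol(G) · (k - 1))`. -/
theorem stmt_7 {V W : Type*} [Fintype V] [Fintype W]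
    (G : SimpleGraph V) (H : SimpleGraph W)
    (hG : G.Connected) (hH : H.Connected)
    (hn : 2 ≤ Fintype.card V) (hk : 2 ≤ Fintype.card W) :
    2 * (Fintype.card W : ℝ) /
        ((gDiam H : ℝ) ^ 2 * (gvol G : ℝ) * ((Fintype.card W : ℝ) - 1))
      ≤ lam G (fun i j => (H.dist i j : ℝ)) := by
  classical
  have hVne : Nonempty V := Fintype.card_pos_iff.mp (by omega)
  have hdegpos : ∀ v : V, 0 < gdeg G v := by
    intro v
    obtain ⟨w, hw⟩ := Fintype.exists_ne_of_one_lt_card (by omega) v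
    obtain ⟨p⟩ := hG.preconnected v w
    have hadj : ∃ x, G.Adj v x := by
      cases p with
      | nil => exact absurd rfl hw
      | cons h q => exact ⟨_, h⟩
    obtain ⟨x, hx⟩ := hadj
    exact (Set.ncard_pos (Set.toFinite _)).mpr ⟨x, hx⟩
  have hdeg1 : ∀ v : V, (1 : ℝ) ≤ (gdeg G v : ℝ) := by
    intro v; exact_mod_cast hdegpos v
  have hvolpos : 0 < (gvol G : ℝ) := by
    have : 0 < gvol G := Finset.sum_pos (fun v _ => hdegpos v) Finset.univ_nonempty
    exact_mod_cast this
  have hdistD : ∀ i j : W, (H.dist i j : ℝ) ≤ (gDiam H : ℝ) := by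
    intro i j
    exact_mod_cast Finset.le_sup (f := fun p : W × W => H.dist p.1 p.2) (Finset.mem_univ (i, j))
  have hD1 : (1 : ℝ) ≤ (gDiam H : ℝ) := by
    have : Nontrivial W := Fintype.one_lt_card_iff_nontrivial.mp (by omega)
    obtain ⟨w1, w2, hw⟩ := exists_pair_ne W
    have h1 : (1 : ℝ) ≤ (H.dist w1 w2 : ℝ) := by
      exact_mod_cast hH.pos_dist_of_ne hw
    exact le_trans h1 (hdistD w1 w2)
  have hk1 : (1 : ℝ) ≤ (Fintype.card W : ℝ) - 1 := by
    have : (2 : ℝ) ≤ (Fintype.card W : ℝ) := by exact_mod_cast hk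
    linarith
  have hkpos : (0 : ℝ) < (Fintype.card W : ℝ) := by positivity
  apply le_csInf
  · -- the set of Rayleigh quotients is nonempty
    obtain ⟨v1, v2, hv⟩ : ∃ a b : V, a ≠ b := by
      have : Nontrivial V := Fintype.one_lt_card_iff_nontrivial.mp (by omega)
      exact exists_pair_ne V
    obtain ⟨w1, w2, hw⟩ : ∃ a b : W, a ≠ b := by
      have : Nontrivial W := Fintype.one_lt_card_iff_nontrivial.mp (by omega)
      exact exists_pair_ne W
    refine ⟨_, ⟨fun x => if x = v1 then w1 else w2, ⟨v1, v2, ?_⟩, rfl⟩⟩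
    simp [hv.symm, hw]
  rintro r ⟨f, ⟨u0, v0, hf0⟩, rfl⟩
  set D : ℝ := (gDiam H : ℝ) with hDdef
  set vol : ℝ := (gvol G : ℝ) with hvoldef
  set k : ℝ := (Fintype.card W : ℝ) with hkdef
  set SE : ℝ := ∑ u, ∑ v, if G.Adj u v then ((H.dist (f u) (f v) : ℝ)) ^ 2 else 0 with hSEdef
  set SP : ℝ := ∑ u, ∑ v, if u ≠ v then
      ((H.dist (f u) (f v) : ℝ)) ^ 2 * (gdeg G u : ℝ) * (gdeg G v : ℝ) else 0 with hSPdef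
  have hRf : Rf G (fun i j => (H.dist i j : ℝ)) f = (vol * (SE / 2)) / (SP / 2) := by
    simp only [Rf, hSEdef, hSPdef, hvoldef]
  -- SE ≥ 2
  have hSE2 : (2 : ℝ) ≤ SE := by
    obtain ⟨p⟩ := hG.preconnected u0 v0
    obtain ⟨a, b, hadj, hne⟩ := aux_exists_adj_ne f p hf0
    have hab : a ≠ b := hadj.ne
    have h1 : (1 : ℝ) ≤ (H.dist (f a) (f b) : ℝ) ^ 2 := by
      have h' : (1 : ℝ) ≤ (H.dist (f a) (f b) : ℝ) := by
        exact_mod_cast hH.pos_dist_of_ne hne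
      nlinarith
    have h2 : (1 : ℝ) ≤ (H.dist (f b) (f a) : ℝ) ^ 2 := by
      have h' : (1 : ℝ) ≤ (H.dist (f b) (f a) : ℝ) := by
        exact_mod_cast hH.pos_dist_of_ne hne.symm
      nlinarith
    have hsub : ({(a, b), (b, a)} : Finset (V × V)) ⊆ Finset.univ ×ˢ Finset.univ := by
      intro x _; simp
    calc (2 : ℝ) = 1 + 1 := by norm_num
      _ ≤ (if G.Adj a b then ((H.dist (f a) (f b) : ℝ)) ^ 2 else 0)
          + (if G.Adj b a then ((H.dist (f b) (f a) : ℝ)) ^ 2 else 0) := by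
          rw [if_pos hadj, if_pos hadj.symm]; linarith
      _ = ∑ q ∈ ({(a, b), (b, a)} : Finset (V × V)),
            (if G.Adj q.1 q.2 then ((H.dist (f q.1) (f q.2) : ℝ)) ^ 2 else 0) := by
          rw [Finset.sum_pair (by simp [hab])]
      _ ≤ ∑ q ∈ Finset.univ ×ˢ Finset.univ,
            (if G.Adj q.1 q.2 then ((H.dist (f q.1) (f q.2) : ℝ)) ^ 2 else 0) := by
          apply Finset.sum_le_sum_of_subset_of_nonneg hsub
          intro q _ _
          by_cases h : G.Adj q.1 q.2
          · rw [if_pos h]; positivity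
          · rw [if_neg h]
      _ = SE := by rw [hSEdef, Finset.sum_product]
  -- SP is positive
  have hu0v0 : u0 ≠ v0 := fun h => hf0 (by rw [h])
  have hSPpos : (0 : ℝ) < SP := by
    have h1 : (1 : ℝ) ≤ (H.dist (f u0) (f v0) : ℝ) ^ 2 := by
      have h' : (1 : ℝ) ≤ (H.dist (f u0) (f v0) : ℝ) := by
        exact_mod_cast hH.pos_dist_of_ne hf0
      nlinarith
    have hterm : (1 : ℝ) ≤ (if u0 ≠ v0 then
        ((H.dist (f u0) (f v0) : ℝ)) ^ 2 * (gdeg G u0 : ℝ) * (gdeg G v0 : ℝ) else 0) := by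
      rw [if_pos hu0v0]
      have ha := hdeg1 u0
      have hb := hdeg1 v0
      have h12 : (1 : ℝ) ≤ (H.dist (f u0) (f v0) : ℝ) ^ 2 * (gdeg G u0 : ℝ) := by nlinarith
      nlinarith
    have hsub : ({(u0, v0)} : Finset (V × V)) ⊆ Finset.univ ×ˢ Finset.univ := by
      intro x _; simp
    have hone : (1 : ℝ) ≤ SP := by
      calc (1 : ℝ) ≤ ∑ q ∈ ({(u0, v0)} : Finset (V × V)),
            (if q.1 ≠ q.2 then
              ((H.dist (f q.1) (f q.2) : ℝ)) ^ 2 * (gdeg G q.1 : ℝ) * (gdeg G q.2 : ℝ) else 0) := by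
            rw [Finset.sum_singleton]; exact hterm
        _ ≤ ∑ q ∈ Finset.univ ×ˢ Finset.univ,
            (if q.1 ≠ q.2 then
              ((H.dist (f q.1) (f q.2) : ℝ)) ^ 2 * (gdeg G q.1 : ℝ) * (gdeg G q.2 : ℝ) else 0) := by
            apply Finset.sum_le_sum_of_subset_of_nonneg hsub
            intro q _ _
            by_cases h : q.1 ≠ q.2
            · rw [if_pos h]
              positivity
            · rw [if_neg h]
        _ = SP := by rw [hSPdef, Finset.sum_product]
    linarith
  -- SP ≤ D² · T
  set T : ℝ := ∑ u, ∑ v, if f u ≠ f v then (gdeg G u : ℝ) * (gdeg G v : ℝ) else 0 with hTdef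
  have hSPle : SP ≤ D ^ 2 * T := by
    rw [hSPdef, hTdef, Finset.mul_sum]
    apply Finset.sum_le_sum
    intro u _
    rw [Finset.mul_sum]
    apply Finset.sum_le_sum
    intro v _
    by_cases hfe : f u = f v
    · have hz : (H.dist (f u) (f v) : ℝ) = 0 := by rw [hfe]; simp
      rw [if_neg (not_not.mpr hfe), mul_zero, hz]
      by_cases huv : u ≠ v
      · rw [if_pos huv]; norm_num
      · rw [if_neg huv]
    · have huv : u ≠ v := fun h => hfe (by rw [h])
      rw [if_pos huv, if_pos hfe]
      have hle := hdistD (f u) (f v)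
      have h0 : (0 : ℝ) ≤ (H.dist (f u) (f v) : ℝ) := Nat.cast_nonneg _
      have hd2 : (H.dist (f u) (f v) : ℝ) ^ 2 ≤ D ^ 2 := by nlinarith
      calc (H.dist (f u) (f v) : ℝ) ^ 2 * (gdeg G u : ℝ) * (gdeg G v : ℝ)
          = (H.dist (f u) (f v) : ℝ) ^ 2 * ((gdeg G u : ℝ) * (gdeg G v : ℝ)) := by ring
        _ ≤ D ^ 2 * ((gdeg G u : ℝ) * (gdeg G v : ℝ)) := by
            apply mul_le_mul_of_nonneg_right hd2
            positivity
  -- k·T ≤ vol²·(k − 1)  (Cauchy–Schwarz)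
  have hdgsum : (∑ u, (gdeg G u : ℝ)) = vol := by
    rw [hvoldef]
    simp [gvol]
  have hTle : k * T ≤ vol ^ 2 * (k - 1) := by
    have := key_T_bound f (fun u => (gdeg G u : ℝ))
    rw [hdgsum] at this
    rw [hTdef, hkdef]
    exact this
  -- final arithmetic
  clear_value SE SP T D vol k
  rw [hRf]
  have hD2pos : (0 : ℝ) < D ^ 2 := by nlinarith
  have hdenpos : (0 : ℝ) < D ^ 2 * vol * (k - 1) :=
    mul_pos (mul_pos hD2pos hvolpos) (by linarith)
  rw [div_le_div_iff₀ hdenpos (by linarith : (0 : ℝ) < SP / 2)]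
  have hx1 : k * SP ≤ k * (D ^ 2 * T) := mul_le_mul_of_nonneg_left hSPle hkpos.le
  have hx2 : D ^ 2 * (k * T) ≤ D ^ 2 * (vol ^ 2 * (k - 1)) :=
    mul_le_mul_of_nonneg_left hTle (sq_nonneg D)
  have hx : k * SP ≤ D ^ 2 * vol ^ 2 * (k - 1) := by nlinarith [hx1, hx2]
  have hpp : (0 : ℝ) < vol * (D ^ 2 * vol * (k - 1)) := mul_pos hvolpos hdenpos
  have h3 : (0 : ℝ) ≤ (SE - 2) * (vol * (D ^ 2 * vol * (k - 1))) :=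
    mul_nonneg (by linarith) hpp.le
  nlinarith [hx, h3]
end

section
/- Let G be a connected finite simple graph with vol(G) ≥ 6, and let H and H' be connected finite simple graphs on the same vertex set with at least two vertices, with diameters D_H and D_{H'} respectively. Then (5 / (3 · vol(G) · D_H² · D_{H'}²)) · λ(G, H) ≤ λ(G, H') ≤ (3 · vol(G) · D_H² · D_{H'}² / 5) · λ(G, H). -/
open scoped Classical
open Finset

section Aux

variable {V W : Type*} [Fintype V]

private lemma Rf_nonneg_s10 (G : SimpleGraph V) (d : W → W → ℝ) (f : V → W) :
    0 ≤ Rf G d f := by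
  unfold Rf
  apply div_nonneg
  · apply mul_nonneg (by positivity)
    apply div_nonneg _ (by norm_num)
    refine Finset.sum_nonneg fun u _ => Finset.sum_nonneg fun v _ => ?_
    split_ifs <;> positivity
  · apply div_nonneg _ (by norm_num)
    refine Finset.sum_nonneg fun u _ => Finset.sum_nonneg fun v _ => ?_
    split_ifs <;> positivity

private lemma den_term_nonneg (G : SimpleGraph V) (d : W → W → ℝ) (f : V → W) (u v : V) :
    0 ≤ (if u ≠ v then d (f u) (f v) ^ 2 * (gdeg G u : ℝ) * (gdeg G v : ℝ) else 0) := by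
  split_ifs <;> positivity

private lemma den_pos (G : SimpleGraph V) (d : W → W → ℝ)
    (hdeg : ∀ v, 1 ≤ (gdeg G v : ℝ))
    (hd1 : ∀ x y : W, x ≠ y → 1 ≤ d x y)
    (f : V → W) (u0 v0 : V) (hne : f u0 ≠ f v0) :
    0 < ∑ u, ∑ v, if u ≠ v then d (f u) (f v) ^ 2 * (gdeg G u : ℝ) * (gdeg G v : ℝ) else 0 := by
  apply Finset.sum_pos'
    (fun u _ => Finset.sum_nonneg fun v _ => den_term_nonneg G d f u v)
  refine ⟨u0, Finset.mem_univ _, ?_⟩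
  apply Finset.sum_pos' (fun v _ => den_term_nonneg G d f u0 v)
  refine ⟨v0, Finset.mem_univ _, ?_⟩
  have huv : u0 ≠ v0 := fun h => hne (by rw [h])
  rw [if_pos huv]
  have h1 := hd1 _ _ hne
  have h2 := hdeg u0
  have h3 := hdeg v0
  have h4 : (0:ℝ) < d (f u0) (f v0) ^ 2 := by nlinarith
  have h5 : (0:ℝ) < ((gdeg G u0 : ℕ) : ℝ) := by linarith
  have h6 : (0:ℝ) < ((gdeg G v0 : ℕ) : ℝ) := by linarith
  exact mul_pos (mul_pos h4 h5) h6

private lemma half_div_half (a n den : ℝ) : (a * (n / 2)) / (den / 2) = a * n / den := by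
  rcases eq_or_ne den 0 with h | h
  · simp [h]
  · field_simp

private lemma Rf_le_mul (G : SimpleGraph V) (d d' : W → W → ℝ) (Dd Dd' : ℝ)
    (hdeg : ∀ v, 1 ≤ (gdeg G v : ℝ))
    (hd0 : ∀ x, d x x = 0) (hd'0 : ∀ x, d' x x = 0)
    (hd1 : ∀ x y : W, x ≠ y → 1 ≤ d x y) (hdD : ∀ x y : W, x ≠ y → d x y ≤ Dd)
    (hd'1 : ∀ x y : W, x ≠ y → 1 ≤ d' x y) (hd'D : ∀ x y : W, x ≠ y → d' x y ≤ Dd')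
    (f : V → W) (hf : ∃ u v, f u ≠ f v) :
    Rf G d' f ≤ Dd ^ 2 * Dd' ^ 2 * Rf G d f := by
  obtain ⟨u0, v0, hne⟩ := hf
  have hDen : 0 < ∑ u, ∑ v, if u ≠ v then
      d (f u) (f v) ^ 2 * (gdeg G u : ℝ) * (gdeg G v : ℝ) else 0 :=
    den_pos G d hdeg hd1 f u0 v0 hne
  have hDen' : 0 < ∑ u, ∑ v, if u ≠ v then
      d' (f u) (f v) ^ 2 * (gdeg G u : ℝ) * (gdeg G v : ℝ) else 0 :=
    den_pos G d' hdeg hd'1 f u0 v0 hne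
  have hN : 0 ≤ ∑ u, ∑ v, if G.Adj u v then d (f u) (f v) ^ 2 else 0 := by
    refine Finset.sum_nonneg fun u _ => Finset.sum_nonneg fun v _ => ?_
    split_ifs <;> positivity
  have hN' : 0 ≤ ∑ u, ∑ v, if G.Adj u v then d' (f u) (f v) ^ 2 else 0 := by
    refine Finset.sum_nonneg fun u _ => Finset.sum_nonneg fun v _ => ?_
    split_ifs <;> positivity
  -- numerator comparison
  have hNle : (∑ u, ∑ v, if G.Adj u v then d' (f u) (f v) ^ 2 else 0)
      ≤ Dd' ^ 2 * ∑ u, ∑ v, if G.Adj u v then d (f u) (f v) ^ 2 else 0 := by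
    calc (∑ u, ∑ v, if G.Adj u v then d' (f u) (f v) ^ 2 else 0)
        ≤ ∑ u, ∑ v, Dd' ^ 2 * (if G.Adj u v then d (f u) (f v) ^ 2 else 0) := by
          refine Finset.sum_le_sum fun u _ => Finset.sum_le_sum fun v _ => ?_
          by_cases h : G.Adj u v
          · rw [if_pos h, if_pos h]
            by_cases hfe : f u = f v
            · rw [hfe, hd'0, hd0]; simp
            · have h1 := hd'1 _ _ hfe
              have h2 := hd'D _ _ hfe
              have h3 := hd1 _ _ hfe
              have h4 : d' (f u) (f v) ^ 2 ≤ Dd' ^ 2 := by nlinarith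
              have h5 : (1 : ℝ) ≤ d (f u) (f v) ^ 2 := by nlinarith
              calc d' (f u) (f v) ^ 2 ≤ Dd' ^ 2 := h4
                _ = Dd' ^ 2 * 1 := by ring
                _ ≤ Dd' ^ 2 * d (f u) (f v) ^ 2 :=
                    mul_le_mul_of_nonneg_left h5 (by positivity)
          · simp [h]
      _ = Dd' ^ 2 * ∑ u, ∑ v, if G.Adj u v then d (f u) (f v) ^ 2 else 0 := by
          simp only [← Finset.mul_sum]
  -- denominator comparison
  have hDle : (∑ u, ∑ v, if u ≠ v then
        d (f u) (f v) ^ 2 * (gdeg G u : ℝ) * (gdeg G v : ℝ) else 0)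
      ≤ Dd ^ 2 * ∑ u, ∑ v, if u ≠ v then
        d' (f u) (f v) ^ 2 * (gdeg G u : ℝ) * (gdeg G v : ℝ) else 0 := by
    calc (∑ u, ∑ v, if u ≠ v then
          d (f u) (f v) ^ 2 * (gdeg G u : ℝ) * (gdeg G v : ℝ) else 0)
        ≤ ∑ u, ∑ v, Dd ^ 2 * (if u ≠ v then
            d' (f u) (f v) ^ 2 * (gdeg G u : ℝ) * (gdeg G v : ℝ) else 0) := by
          refine Finset.sum_le_sum fun u _ => Finset.sum_le_sum fun v _ => ?_
          by_cases h : u ≠ v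
          · rw [if_pos h, if_pos h]
            by_cases hfe : f u = f v
            · rw [hfe, hd'0, hd0]; simp
            · have h1 := hd1 _ _ hfe
              have h2 := hdD _ _ hfe
              have h3 := hd'1 _ _ hfe
              have ha : d (f u) (f v) ^ 2 ≤ Dd ^ 2 := by nlinarith
              have hb : (1:ℝ) ≤ d' (f u) (f v) ^ 2 := by nlinarith
              have hDdnn : (0:ℝ) ≤ Dd ^ 2 := by positivity
              have h4 : d (f u) (f v) ^ 2 ≤ Dd ^ 2 * d' (f u) (f v) ^ 2 := by
                nlinarith [mul_le_mul_of_nonneg_left hb hDdnn]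
              have hu := hdeg u
              have hv := hdeg v
              have hdd : (0:ℝ) ≤ (gdeg G u : ℝ) * (gdeg G v : ℝ) := by positivity
              nlinarith [mul_le_mul_of_nonneg_right h4 hdd]
          · simp [h]
      _ = Dd ^ 2 * ∑ u, ∑ v, if u ≠ v then
            d' (f u) (f v) ^ 2 * (gdeg G u : ℝ) * (gdeg G v : ℝ) else 0 := by
          simp only [← Finset.mul_sum]
  have e' : Rf G d' f = (gvol G : ℝ) *
      (∑ u, ∑ v, if G.Adj u v then d' (f u) (f v) ^ 2 else 0) /
      (∑ u, ∑ v, if u ≠ v then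
        d' (f u) (f v) ^ 2 * (gdeg G u : ℝ) * (gdeg G v : ℝ) else 0) := by
    unfold Rf; exact half_div_half _ _ _
  have e : Rf G d f = (gvol G : ℝ) *
      (∑ u, ∑ v, if G.Adj u v then d (f u) (f v) ^ 2 else 0) /
      (∑ u, ∑ v, if u ≠ v then
        d (f u) (f v) ^ 2 * (gdeg G u : ℝ) * (gdeg G v : ℝ) else 0) := by
    unfold Rf; exact half_div_half _ _ _
  rw [e, e', ← mul_div_assoc]
  rw [div_le_div_iff₀ hDen' hDen]
  have hvol : (0:ℝ) ≤ (gvol G : ℝ) := Nat.cast_nonneg _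
  have key : (∑ u, ∑ v, if G.Adj u v then d' (f u) (f v) ^ 2 else 0) *
      (∑ u, ∑ v, if u ≠ v then
        d (f u) (f v) ^ 2 * (gdeg G u : ℝ) * (gdeg G v : ℝ) else 0)
      ≤ (Dd' ^ 2 * ∑ u, ∑ v, if G.Adj u v then d (f u) (f v) ^ 2 else 0) *
        (Dd ^ 2 * ∑ u, ∑ v, if u ≠ v then
          d' (f u) (f v) ^ 2 * (gdeg G u : ℝ) * (gdeg G v : ℝ) else 0) :=
    mul_le_mul hNle hDle hDen.le (by positivity)
  nlinarith [mul_le_mul_of_nonneg_left key hvol]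

private lemma lam_nonneg (G : SimpleGraph V) (d : W → W → ℝ)
    (hex : ∃ f : V → W, ∃ u v, f u ≠ f v) : 0 ≤ lam G d := by
  obtain ⟨f0, hf0⟩ := hex
  exact le_csInf ⟨_, f0, hf0, rfl⟩ (by rintro r ⟨f, _, rfl⟩; exact Rf_nonneg_s10 G d f)

private lemma lam_le_mul (G : SimpleGraph V) (d d' : W → W → ℝ) (C : ℝ) (hC : 0 < C)
    (hR : ∀ f : V → W, (∃ u v, f u ≠ f v) → Rf G d' f ≤ C * Rf G d f)
    (hex : ∃ f : V → W, ∃ u v, f u ≠ f v) :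
    lam G d' ≤ C * lam G d := by
  obtain ⟨f0, hf0⟩ := hex
  have hSne : {r | ∃ f : V → W, (∃ u v, f u ≠ f v) ∧ r = Rf G d f}.Nonempty :=
    ⟨_, f0, hf0, rfl⟩
  have hS'bdd : BddBelow {r | ∃ f : V → W, (∃ u v, f u ≠ f v) ∧ r = Rf G d' f} := by
    refine ⟨0, ?_⟩
    rintro r ⟨f, _, rfl⟩
    exact Rf_nonneg_s10 G d' f
  have h : lam G d' / C ≤ lam G d := by
    apply le_csInf hSne
    rintro r ⟨f, hf, rfl⟩
    rw [div_le_iff₀ hC]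
    have h1 : lam G d' ≤ Rf G d' f := csInf_le hS'bdd ⟨f, hf, rfl⟩
    have h2 := hR f hf
    nlinarith
  calc lam G d' = lam G d' / C * C := by field_simp
    _ ≤ lam G d * C := mul_le_mul_of_nonneg_right h hC.le
    _ = C * lam G d := mul_comm _ _

end Aux

/-- For a connected finite simple graph `G` with `vol(G) ≥ 6` and connected
graphs `H`, `H'` on the same vertex set with at least two vertices and diameters `D_H`,
`D_{H'}`, one has
`(5 / (3 vol(G) D_H² D_{H'}²)) λ(G,H) ≤ λ(G,H') ≤ (3 vol(G) D_H² D_{H'}² / 5) λ(G,H)`. -/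
theorem stmt_10 {V W : Type*} [Fintype V] [Fintype W]
    (G : SimpleGraph V) (H H' : SimpleGraph W)
    (hG : G.Connected) (hvol : 6 ≤ gvol G)
    (hH : H.Connected) (hH' : H'.Connected) (hk : 2 ≤ Fintype.card W) :
    5 / (3 * (gvol G : ℝ) * (gDiam H : ℝ) ^ 2 * (gDiam H' : ℝ) ^ 2) *
        lam G (fun i j => (H.dist i j : ℝ))
      ≤ lam G (fun i j => (H'.dist i j : ℝ)) ∧
    lam G (fun i j => (H'.dist i j : ℝ)) ≤
      3 * (gvol G : ℝ) * (gDiam H : ℝ) ^ 2 * (gDiam H' : ℝ) ^ 2 / 5 *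
        lam G (fun i j => (H.dist i j : ℝ)) := by
  -- basic facts about G
  classical
  have hvdeg : ∃ v : V, 0 < gdeg G v := by
    by_contra h
    push_neg at h
    have : gvol G = 0 := by
      unfold gvol
      exact Finset.sum_eq_zero fun v _ => Nat.le_zero.mp (h v)
    omega
  obtain ⟨x, hx⟩ := hvdeg
  have hxne : (G.neighborSet x).Nonempty := by
    rw [← Set.ncard_pos (Set.toFinite _)]
    exact hx
  obtain ⟨y, hy⟩ := hxne
  have hxy : y ≠ x := (G.mem_neighborSet x y |>.mp hy).ne'
  have hdeg : ∀ w : V, 1 ≤ gdeg G w := by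
    intro w
    obtain ⟨t, ht⟩ : ∃ t : V, t ≠ w := by
      by_cases h : y = w
      · exact ⟨x, fun hc => hxy (h.trans hc.symm)⟩
      · exact ⟨y, h⟩
    obtain ⟨p⟩ := hG.preconnected w t
    have hnil : ¬ p.Nil := SimpleGraph.Walk.not_nil_of_ne (Ne.symm ht)
    have hadj : G.Adj w (p.getVert 1) := p.adj_snd hnil
    have : 0 < (G.neighborSet w).ncard :=
      (Set.ncard_pos (Set.toFinite _)).mpr ⟨p.getVert 1, hadj⟩
    exact this
  have hdegR : ∀ w : V, 1 ≤ ((gdeg G w : ℕ) : ℝ) := fun w => by exact_mod_cast hdeg w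
  -- distance facts for a connected graph K on W
  have distfacts : ∀ K : SimpleGraph W, K.Connected →
      (∀ a : W, ((K.dist a a : ℕ) : ℝ) = 0) ∧
      (∀ a b : W, a ≠ b → 1 ≤ ((K.dist a b : ℕ) : ℝ)) ∧
      (∀ a b : W, a ≠ b → ((K.dist a b : ℕ) : ℝ) ≤ (gDiam K : ℝ)) := by
    intro K hK
    refine ⟨fun a => by simp [SimpleGraph.dist_self], fun a b hab => ?_, fun a b hab => ?_⟩
    · have := hK.pos_dist_of_ne hab
      exact_mod_cast this
    · have : K.dist a b ≤ gDiam K :=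
        Finset.le_sup (f := fun p : W × W => K.dist p.1 p.2) (Finset.mem_univ (a, b))
      exact_mod_cast this
  obtain ⟨hH0, hH1, hHD⟩ := distfacts H hH
  obtain ⟨hH'0, hH'1, hH'D⟩ := distfacts H' hH'
  -- existence of a nonconstant map V → W
  obtain ⟨a, b, hab⟩ := Fintype.exists_pair_of_one_lt_card hk
  have hex : ∃ f : V → W, ∃ u v, f u ≠ f v := by
    refine ⟨fun z => if z = x then a else b, x, y, ?_⟩
    simp only [if_pos rfl, if_neg hxy]
    exact hab
  -- diameters are at least 1
  set DH : ℝ := (gDiam H : ℝ) with hDHdef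
  set DH' : ℝ := (gDiam H' : ℝ) with hDH'def
  have hDH1 : 1 ≤ DH := le_trans (hH1 a b hab) (hHD a b hab)
  have hDH'1 : 1 ≤ DH' := le_trans (hH'1 a b hab) (hH'D a b hab)
  have hDHpos : 0 < DH := lt_of_lt_of_le one_pos hDH1
  have hDH'pos : 0 < DH' := lt_of_lt_of_le one_pos hDH'1
  set dH : W → W → ℝ := fun i j => (H.dist i j : ℝ) with hdHdef
  set dH' : W → W → ℝ := fun i j => (H'.dist i j : ℝ) with hdH'def
  have hC : (0:ℝ) < DH ^ 2 * DH' ^ 2 := by positivity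
  have hle1 : lam G dH' ≤ DH ^ 2 * DH' ^ 2 * lam G dH := by
    apply lam_le_mul G dH dH' _ hC _ hex
    intro f hf
    exact Rf_le_mul G dH dH' DH DH' hdegR hH0 hH'0 hH1 hHD hH'1 hH'D f hf
  have hC2 : (0:ℝ) < DH' ^ 2 * DH ^ 2 := by positivity
  have hle2 : lam G dH ≤ DH' ^ 2 * DH ^ 2 * lam G dH' := by
    apply lam_le_mul G dH' dH _ hC2 _ hex
    intro f hf
    exact Rf_le_mul G dH' dH DH' DH hdegR hH'0 hH0 hH'1 hH'D hH1 hHD f hf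
  have hlamnn : 0 ≤ lam G dH := lam_nonneg G dH hex
  have hlamnn' : 0 ≤ lam G dH' := lam_nonneg G dH' hex
  have hvolR : (6:ℝ) ≤ (gvol G : ℝ) := by exact_mod_cast hvol
  constructor
  · -- lower bound
    have hK : (0:ℝ) < 3 * (gvol G : ℝ) * DH ^ 2 * DH' ^ 2 := by positivity
    rw [div_mul_eq_mul_div, div_le_iff₀ hK]
    have hfac : (0:ℝ) ≤ (3 * (gvol G : ℝ) - 5) * (DH' ^ 2 * DH ^ 2 * lam G dH') := by
      apply mul_nonneg (by linarith)
      positivity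
    nlinarith [hle2, hfac]
  · -- upper bound
    have hfac : (0:ℝ) ≤ (3 * (gvol G : ℝ) - 5) * (DH ^ 2 * DH' ^ 2 * lam G dH) := by
      apply mul_nonneg (by linarith)
      positivity
    nlinarith [hle1, hfac]
end
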